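/- The functor G from (S ⊗ S^op)-modules to (B ⊗ B^op)-modules sending Y to [[Y, 0],[M ⊗_S Y, 0]] is naturally isomorphic to B(1−ε) ⊗_S (−) ⊗_S (1−ε)B; it is fully faithful and sends projective objects to projective objects. -/

import Mathlib

set_option linter.unusedSectionVars false
set_option maxHeartbeats 1000000
set_option synthInstance.maxHeartbeats 400000

open MulOpposite
open scoped TensorProduct

universe u

noncomputable section

open scoped TensorProduct
open MulOpposite

namespace NC

noncomputable section

universe w v

variable (k : Type w) [CommRing k] (B : Type u) [Ring B]
variable (M N : Type v) [AddCommGroup M] [AddCommGroup N] [Module k M] [Module k N]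
variable [Module Bᵐᵒᵖ M] [Module B N]

/-- The defining relations of the balanced tensor product `M ⊗_B N`. -/
def rel : Submodule k (TensorProduct k M N) :=
  Submodule.span k
    {z | ∃ (b : B) (m : M) (n : N), z = (op b • m) ⊗ₜ[k] n - m ⊗ₜ[k] (b • n)}

/-- The balanced tensor product `M ⊗_B N` of a right `B`-module `M` and a left
`B`-module `N` over the noncommutative ring `B`, as a quotient of `M ⊗[k] N`. -/
def Tensor := TensorProduct k M N ⧸ rel k B M N

instance : AddCommGroup (Tensor k B M N) :=
  inferInstanceAs (AddCommGroup (TensorProduct k M N ⧸ rel k B M N))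

instance : Module k (Tensor k B M N) :=
  inferInstanceAs (Module k (TensorProduct k M N ⧸ rel k B M N))

variable {M N}

/-- The canonical image of `m ⊗ n` in `M ⊗_B N`. -/
def mk (m : M) (n : N) : Tensor k B M N :=
  Submodule.Quotient.mk (m ⊗ₜ[k] n)

lemma mk_balanced (b : B) (m : M) (n : N) : mk k B (op b • m) n = mk k B m (b • n) := by
  exact (Submodule.Quotient.eq (rel k B M N)).mpr (Submodule.subset_span ⟨b, m, n, rfl⟩)

lemma mk_add_left (m m' : M) (n : N) : mk k B (m + m') n = mk k B m n + mk k B m' n := by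
  exact (congrArg (Submodule.Quotient.mk (p := rel k B M N)) (TensorProduct.add_tmul m m' n)).trans
    (Submodule.Quotient.mk_add _)

lemma mk_add_right (m : M) (n n' : N) : mk k B m (n + n') = mk k B m n + mk k B m n' := by
  exact (congrArg (Submodule.Quotient.mk (p := rel k B M N)) (TensorProduct.tmul_add m n n')).trans
    (Submodule.Quotient.mk_add _)

lemma smul_mk_k (c : k) (m : M) (n : N) : c • mk k B m n = mk k B (c • m) n := by
  exact (Submodule.Quotient.mk_smul (rel k B M N) c (m ⊗ₜ[k] n)).symm.trans
    (congrArg (Submodule.Quotient.mk (p := rel k B M N)) (TensorProduct.smul_tmul' c m n))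

lemma smul_mk_k' (c : k) (m : M) (n : N) : c • mk k B m n = mk k B m (c • n) := by
  exact (Submodule.Quotient.mk_smul (rel k B M N) c (m ⊗ₜ[k] n)).symm.trans
    (congrArg (Submodule.Quotient.mk (p := rel k B M N)) (TensorProduct.tmul_smul c m n).symm)

lemma mk_zero_left (n : N) : mk k B (0 : M) n = 0 := by
  exact (congrArg (Submodule.Quotient.mk (p := rel k B M N)) (TensorProduct.zero_tmul M n)).trans
    (Submodule.Quotient.mk_zero _)

lemma mk_zero_right (m : M) : mk k B m (0 : N) = 0 := by
  exact (congrArg (Submodule.Quotient.mk (p := rel k B M N)) (TensorProduct.tmul_zero N m)).trans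
    (Submodule.Quotient.mk_zero _)

lemma induction_on {p : Tensor k B M N → Prop} (t : Tensor k B M N)
    (zero : p 0) (basic : ∀ m n, p (mk k B m n))
    (add : ∀ x y, p x → p y → p (x + y)) : p t := by
  obtain ⟨x, rfl⟩ := Submodule.Quotient.mk_surjective _ t
  induction x using TensorProduct.induction_on with
  | zero => exact zero
  | tmul m n => exact basic m n
  | add x y hx hy => rw [Submodule.Quotient.mk_add]; exact add _ _ hx hy

section Lift

variable {P : Type v} [AddCommGroup P] [Module k P]

/-- Lift a balanced `k`-bilinear map to the balanced tensor product. -/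
def lift (f : M →ₗ[k] N →ₗ[k] P)
    (hf : ∀ (b : B) (m : M) (n : N), f (op b • m) n = f m (b • n)) :
    Tensor k B M N →ₗ[k] P :=
  Submodule.liftQ _ (TensorProduct.lift f) (by
    rw [rel, Submodule.span_le]
    rintro z ⟨b, m, n, rfl⟩
    simp [LinearMap.mem_ker, hf b m n])

@[simp] lemma lift_mk (f : M →ₗ[k] N →ₗ[k] P) (hf) (m : M) (n : N) :
    lift k B f hf (mk k B m n) = f m n := rfl

end Lift

section LeftAction

variable (A : Type u) [Ring A] [Module A M]
variable [SMulCommClass A Bᵐᵒᵖ M] [SMulCommClass A k M]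

/-- The `k`-linear endomorphism of `M` given by the action of `a : A`. -/
def actL (a : A) : M →ₗ[k] M where
  toFun m := a • m
  map_add' := smul_add a
  map_smul' c m := (smul_comm a c m)

variable (N)

lemma relLe (a : A) :
    rel k B M N ≤ Submodule.comap (LinearMap.rTensor N (actL k A a)) (rel k B M N) := by
  rw [rel, Submodule.span_le]
  rintro z ⟨b, m, n, rfl⟩
  simp only [SetLike.mem_coe, Submodule.mem_comap, map_sub, LinearMap.rTensor_tmul]
  refine Submodule.subset_span ⟨b, a • m, n, ?_⟩
  have h1 : actL k A a (op b • m) = op b • (a • m) := smul_comm a (op b) m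
  have h2 : actL k A a m = a • m := rfl
  rw [h1, h2]

/-- The action of `a : A` on `M ⊗_B N`. -/
def actLQ (a : A) : Tensor k B M N →ₗ[k] Tensor k B M N :=
  Submodule.mapQ _ _ (LinearMap.rTensor N (actL k A a)) (relLe k B N A a)

lemma actLQ_mk (a : A) (m : M) (n : N) :
    actLQ k B N A a (mk k B m n) = mk k B (a • m) n := rfl

/-- The ring homomorphism `A → End_k (M ⊗_B N)` defining the left `A`-module structure. -/
def actLRingHom : A →+* Module.End k (Tensor k B M N) where
  toFun := actLQ k B N A
  map_one' := by
    refine Submodule.linearMap_qext _ (TensorProduct.ext' fun m n => ?_)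
    show actLQ k B N A 1 (mk k B m n) = mk k B m n
    rw [actLQ_mk, one_smul]
  map_mul' x y := by
    refine Submodule.linearMap_qext _ (TensorProduct.ext' fun m n => ?_)
    show actLQ k B N A (x * y) (mk k B m n) = actLQ k B N A x (actLQ k B N A y (mk k B m n))
    rw [actLQ_mk, actLQ_mk, actLQ_mk, mul_smul]
  map_zero' := by
    refine Submodule.linearMap_qext _ (TensorProduct.ext' fun m n => ?_)
    show actLQ k B N A 0 (mk k B m n) = 0
    rw [actLQ_mk, zero_smul, mk_zero_left]
  map_add' x y := by
    refine Submodule.linearMap_qext _ (TensorProduct.ext' fun m n => ?_)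
    show actLQ k B N A (x + y) (mk k B m n)
        = actLQ k B N A x (mk k B m n) + actLQ k B N A y (mk k B m n)
    rw [actLQ_mk, actLQ_mk, actLQ_mk, add_smul, mk_add_left]

variable (M)

/-- The left `A`-module structure on `M ⊗_B N` induced by the left `A`-action on `M`. -/
def leftModule : Module A (Tensor k B M N) :=
  Module.compHom (Tensor k B M N) (actLRingHom k B N A (M := M))

attribute [local instance] leftModule

lemma smul_mk_left (a : A) (m : M) (n : N) :
    a • mk k B m n = mk k B (a • m) n := rfl

instance : SMulCommClass A k (Tensor k B M N) where
  smul_comm a c t := by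
    induction t using induction_on with
    | zero => simp
    | basic m n => rw [smul_mk_k, smul_mk_left, smul_mk_left, smul_mk_k, smul_comm]
    | add x y hx hy => simp [smul_add, hx, hy]

instance : SMulCommClass k A (Tensor k B M N) := SMulCommClass.symm _ _ _

end LeftAction

section RightAction

variable (C : Type u) [Ring C] [Module Cᵐᵒᵖ N]
variable [SMulCommClass Cᵐᵒᵖ B N] [SMulCommClass Cᵐᵒᵖ k N]

/-- The `k`-linear endomorphism of `N` given by the right action of `c : C`. -/
def actR (c : Cᵐᵒᵖ) : N →ₗ[k] N where
  toFun n := c • n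
  map_add' := smul_add c
  map_smul' d n := (smul_comm c d n)

variable (M)

lemma relLeR (c : Cᵐᵒᵖ) :
    rel k B M N ≤ Submodule.comap (LinearMap.lTensor M (actR k C c)) (rel k B M N) := by
  rw [rel, Submodule.span_le]
  rintro z ⟨b, m, n, rfl⟩
  simp only [SetLike.mem_coe, Submodule.mem_comap, map_sub, LinearMap.lTensor_tmul]
  refine Submodule.subset_span ⟨b, m, c • n, ?_⟩
  have h1 : actR k C c (b • n) = b • (c • n) := smul_comm c b n
  have h2 : actR k C c n = c • n := rfl
  rw [h1, h2]

/-- The right action of `c : C` on `M ⊗_B N`. -/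
def actRQ (c : Cᵐᵒᵖ) : Tensor k B M N →ₗ[k] Tensor k B M N :=
  Submodule.mapQ _ _ (LinearMap.lTensor M (actR k C c)) (relLeR k B M C c)

lemma actRQ_mk (c : Cᵐᵒᵖ) (m : M) (n : N) :
    actRQ k B M C c (mk k B m n) = mk k B m (c • n) := rfl

/-- The ring homomorphism `Cᵐᵒᵖ → End_k (M ⊗_B N)` defining the right `C`-module structure. -/
def actRRingHom : Cᵐᵒᵖ →+* Module.End k (Tensor k B M N) where
  toFun := actRQ k B M C
  map_one' := by
    refine Submodule.linearMap_qext _ (TensorProduct.ext' fun m n => ?_)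
    show actRQ k B M C 1 (mk k B m n) = mk k B m n
    rw [actRQ_mk, one_smul]
  map_mul' x y := by
    refine Submodule.linearMap_qext _ (TensorProduct.ext' fun m n => ?_)
    show actRQ k B M C (x * y) (mk k B m n) = actRQ k B M C x (actRQ k B M C y (mk k B m n))
    rw [actRQ_mk, actRQ_mk, actRQ_mk, mul_smul]
  map_zero' := by
    refine Submodule.linearMap_qext _ (TensorProduct.ext' fun m n => ?_)
    show actRQ k B M C 0 (mk k B m n) = 0
    rw [actRQ_mk, zero_smul, mk_zero_right]
  map_add' x y := by
    refine Submodule.linearMap_qext _ (TensorProduct.ext' fun m n => ?_)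
    show actRQ k B M C (x + y) (mk k B m n)
        = actRQ k B M C x (mk k B m n) + actRQ k B M C y (mk k B m n)
    rw [actRQ_mk, actRQ_mk, actRQ_mk, add_smul, mk_add_right]

/-- The right `C`-module structure on `M ⊗_B N` induced by the right `C`-action on `N`. -/
def rightModule : Module Cᵐᵒᵖ (Tensor k B M N) :=
  Module.compHom (Tensor k B M N) (actRRingHom k B M C (N := N))

attribute [local instance] rightModule

lemma smul_mk_right (c : Cᵐᵒᵖ) (m : M) (n : N) :
    c • mk k B m n = mk k B m (c • n) := rfl

instance : SMulCommClass Cᵐᵒᵖ k (Tensor k B M N) where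
  smul_comm c d t := by
    induction t using induction_on with
    | zero => simp
    | basic m n =>
        rw [smul_mk_k, smul_mk_right, smul_mk_right, smul_mk_k]
    | add x y hx hy => simp [smul_add, hx, hy]

instance : SMulCommClass k Cᵐᵒᵖ (Tensor k B M N) := SMulCommClass.symm _ _ _

end RightAction

section Bimodule

variable (A C : Type u) [Ring A] [Ring C] [Module A M] [Module Cᵐᵒᵖ N]
variable [SMulCommClass A Bᵐᵒᵖ M] [SMulCommClass A k M]
variable [SMulCommClass Cᵐᵒᵖ B N] [SMulCommClass Cᵐᵒᵖ k N]

attribute [local instance] leftModule rightModule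

instance : SMulCommClass A Cᵐᵒᵖ (Tensor k B M N) where
  smul_comm a c t := by
    induction t using induction_on with
    | zero => simp
    | basic m n =>
        simp only [smul_mk_right k B M C, smul_mk_left k B M N A]
    | add x y hx hy => simp [smul_add, hx, hy]

section Tower

variable [Algebra k A] [Module k M] [IsScalarTower k A M]

instance : IsScalarTower k A (Tensor k B M N) where
  smul_assoc c a t := by
    induction t using induction_on with
    | zero => simp
    | basic m n =>
        simp only [smul_mk_left k B M N A, smul_mk_k, smul_assoc]
    | add x y hx hy => simp [smul_add, hx, hy]

end Tower

section TowerR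

variable [Algebra k C] [IsScalarTower k Cᵐᵒᵖ N]

instance : IsScalarTower k Cᵐᵒᵖ (Tensor k B M N) where
  smul_assoc c a t := by
    induction t using induction_on with
    | zero => simp
    | basic m n =>
        simp only [smul_mk_right k B M C, smul_mk_k', smul_assoc]
    | add x y hx hy => simp [smul_add, hx, hy]

end TowerR

end Bimodule

end

end NC


open MulOpposite


/-- The lower triangular matrix algebra `[[S, 0], [M, A]]` associated to rings `S`, `A`
and an `(A, S)`-bimodule `M`. -/
@[ext] structure Tri (S M A : Type u) where
  s : S
  m : M
  a : A

namespace Tri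

variable {S M A : Type u} [Ring S] [Ring A] [AddCommGroup M]
variable [Module A M] [Module Sᵐᵒᵖ M] [SMulCommClass A Sᵐᵒᵖ M]

instance : Zero (Tri S M A) := ⟨⟨0, 0, 0⟩⟩
instance : Add (Tri S M A) := ⟨fun x y => ⟨x.s + y.s, x.m + y.m, x.a + y.a⟩⟩
instance : Neg (Tri S M A) := ⟨fun x => ⟨-x.s, -x.m, -x.a⟩⟩
instance : One (Tri S M A) := ⟨⟨1, 0, 1⟩⟩
instance : Mul (Tri S M A) :=
  ⟨fun x y => ⟨x.s * y.s, op y.s • x.m + x.a • y.m, x.a * y.a⟩⟩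

@[simp] lemma zero_s : (0 : Tri S M A).s = 0 := rfl
@[simp] lemma zero_m : (0 : Tri S M A).m = 0 := rfl
@[simp] lemma zero_a : (0 : Tri S M A).a = 0 := rfl
@[simp] lemma add_s (x y : Tri S M A) : (x + y).s = x.s + y.s := rfl
@[simp] lemma add_m (x y : Tri S M A) : (x + y).m = x.m + y.m := rfl
@[simp] lemma add_a (x y : Tri S M A) : (x + y).a = x.a + y.a := rfl
@[simp] lemma neg_s (x : Tri S M A) : (-x).s = -x.s := rfl
@[simp] lemma neg_m (x : Tri S M A) : (-x).m = -x.m := rfl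
@[simp] lemma neg_a (x : Tri S M A) : (-x).a = -x.a := rfl
@[simp] lemma one_s : (1 : Tri S M A).s = 1 := rfl
@[simp] lemma one_m : (1 : Tri S M A).m = 0 := rfl
@[simp] lemma one_a : (1 : Tri S M A).a = 1 := rfl
@[simp] lemma mul_s (x y : Tri S M A) : (x * y).s = x.s * y.s := rfl
@[simp] lemma mul_m (x y : Tri S M A) : (x * y).m = op y.s • x.m + x.a • y.m := rfl
@[simp] lemma mul_a (x y : Tri S M A) : (x * y).a = x.a * y.a := rfl

instance : AddCommGroup (Tri S M A) where
  add_assoc x y z := by ext <;> simp [add_assoc]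
  zero_add x := by ext <;> simp
  add_zero x := by ext <;> simp
  neg_add_cancel x := by ext <;> simp
  add_comm x y := by ext <;> simp [add_comm]
  nsmul := nsmulRec
  zsmul := zsmulRec

instance : Ring (Tri S M A) where
  __ := (inferInstance : AddCommGroup (Tri S M A))
  mul_assoc x y z := by
    ext <;> simp [mul_assoc, mul_smul, smul_add, smul_comm, add_assoc]
  one_mul x := by ext <;> simp
  mul_one x := by ext <;> simp
  left_distrib x y z := by ext <;> (simp [mul_add, smul_add, add_smul]; try abel)
  right_distrib x y z := by ext <;> (simp [add_mul, smul_add, add_smul]; try abel)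
  zero_mul x := by ext <;> simp
  mul_zero x := by ext <;> simp

@[simp] lemma sub_s (x y : Tri S M A) : (x - y).s = x.s - y.s := by
  change (x + -y).s = _; rw [add_s, neg_s, sub_eq_add_neg]

@[simp] lemma sub_m (x y : Tri S M A) : (x - y).m = x.m - y.m := by
  change (x + -y).m = _; rw [add_m, neg_m, sub_eq_add_neg]

@[simp] lemma sub_a (x y : Tri S M A) : (x - y).a = x.a - y.a := by
  change (x + -y).a = _; rw [add_a, neg_a, sub_eq_add_neg]

/-- The idempotent `ε = [[0,0],[0,1]]`. -/
def eps : Tri S M A := ⟨0, 0, 1⟩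

@[simp] lemma eps_s : (eps : Tri S M A).s = 0 := rfl
@[simp] lemma eps_m : (eps : Tri S M A).m = 0 := rfl
@[simp] lemma eps_a : (eps : Tri S M A).a = 1 := rfl

lemma eps_idem : (eps : Tri S M A) * eps = eps := by ext <;> simp

/-- The (non-unital) embedding of `A` in the lower right corner. -/
def iota (a : A) : Tri S M A := ⟨0, 0, a⟩

@[simp] lemma iota_s (a : A) : (iota a : Tri S M A).s = 0 := rfl
@[simp] lemma iota_m (a : A) : (iota a : Tri S M A).m = 0 := rfl
@[simp] lemma iota_a (a : A) : (iota a : Tri S M A).a = a := rfl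

section Alg

variable (k : Type u) [CommRing k] [Algebra k S] [Algebra k A] [Module k M]
variable [IsScalarTower k A M] [IsScalarTower k Sᵐᵒᵖ M]

/-- The canonical ring homomorphism `k → Tri S M A`. -/
def algMap : k →+* Tri S M A where
  toFun c := ⟨algebraMap k S c, 0, algebraMap k A c⟩
  map_one' := by ext <;> simp
  map_mul' x y := by ext <;> simp
  map_zero' := by ext <;> simp
  map_add' x y := by ext <;> simp

instance : Algebra k (Tri S M A) :=
  RingHom.toAlgebra' (algMap k) (by
    intro c x
    ext
    · simp [algMap, Algebra.commutes]
    · show op x.s • (0 : M) + algebraMap k A c • x.m = op (algebraMap k S c) • x.m + x.a • 0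
      rw [smul_zero, smul_zero, zero_add, add_zero, ← MulOpposite.algebraMap_apply,
        algebraMap_smul, algebraMap_smul]
    · simp [algMap, Algebra.commutes])

end Alg

end Tri

section Corner

variable (S A M : Type u) [Ring S] [Ring A] [AddCommGroup M]
variable [Module A M] [Module Sᵐᵒᵖ M] [SMulCommClass A Sᵐᵒᵖ M]

@[simp] lemma iota_mul (a b : A) :
    (Tri.iota (a * b) : Tri S M A) = Tri.iota a * Tri.iota b := by ext <;> simp

@[simp] lemma iota_add (a b : A) :
    (Tri.iota (a + b) : Tri S M A) = Tri.iota a + Tri.iota b := by ext <;> simp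

@[simp] lemma iota_zero : (Tri.iota (0 : A) : Tri S M A) = 0 := by ext <;> simp

lemma iota_one : (Tri.iota (1 : A) : Tri S M A) = Tri.eps := by ext <;> simp

@[simp] lemma eps_mul_iota (a : A) :
    (Tri.eps : Tri S M A) * Tri.iota a = Tri.iota a := by ext <;> simp

@[simp] lemma iota_mul_eps (a : A) :
    (Tri.iota a : Tri S M A) * Tri.eps = Tri.iota a := by ext <;> simp

/-- The right ideal `εB` of `B = Tri S M A`, as a right `B`-module. -/
def epsRight : Submodule (Tri S M A)ᵐᵒᵖ (Tri S M A) where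
  carrier := {x | Tri.eps * x = x}
  add_mem' := fun {a} {b} ha hb => by
    simp only [Set.mem_setOf_eq] at *
    rw [mul_add, ha, hb]
  zero_mem' := by simp
  smul_mem' := fun c {x} hx => by
    simp only [Set.mem_setOf_eq] at *
    rw [MulOpposite.smul_eq_mul_unop, ← mul_assoc, hx]

/-- The right ideal `(1-ε)B` of `B = Tri S M A`, as a right `B`-module. -/
def oneEpsRight : Submodule (Tri S M A)ᵐᵒᵖ (Tri S M A) where
  carrier := {x | (1 - Tri.eps) * x = x}
  add_mem' := fun {a} {b} ha hb => by
    simp only [Set.mem_setOf_eq] at *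
    rw [mul_add, ha, hb]
  zero_mem' := by simp
  smul_mem' := fun c {x} hx => by
    simp only [Set.mem_setOf_eq] at *
    rw [MulOpposite.smul_eq_mul_unop, ← mul_assoc, hx]

/-- The left ideal `Bε` of `B = Tri S M A`, as a left `B`-module. -/
def epsLeft : Submodule (Tri S M A) (Tri S M A) where
  carrier := {x | x * Tri.eps = x}
  add_mem' := fun {a} {b} ha hb => by
    simp only [Set.mem_setOf_eq] at *
    rw [add_mul, ha, hb]
  zero_mem' := by simp
  smul_mem' := fun c {x} hx => by
    simp only [Set.mem_setOf_eq, smul_eq_mul] at *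
    rw [mul_assoc, hx]

/-- The left `A`-action on `εB` via `a • x = ι(a) x`. -/
instance : Module A (epsRight S A M) where
  smul a x := ⟨Tri.iota a * x.val, by
    have hx := x.2
    simp only [epsRight, Submodule.mem_mk, AddSubmonoid.mem_mk, AddSubsemigroup.mem_mk,
      Set.mem_setOf_eq] at *
    rw [← mul_assoc, eps_mul_iota]⟩
  one_smul x := Subtype.ext (by
    show Tri.iota 1 * x.val = x.val
    rw [iota_one]; exact x.2)
  mul_smul a b x := Subtype.ext (by
    show Tri.iota (a * b) * x.val = Tri.iota a * (Tri.iota b * x.val)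
    rw [iota_mul, mul_assoc])
  smul_zero a := Subtype.ext (mul_zero _)
  smul_add a x y := Subtype.ext (mul_add _ _ _)
  add_smul a b x := Subtype.ext (by
    show Tri.iota (a + b) * x.val = Tri.iota a * x.val + Tri.iota b * x.val
    rw [iota_add, add_mul])
  zero_smul x := Subtype.ext (by
    show Tri.iota 0 * x.val = 0
    rw [iota_zero, zero_mul])

lemma epsRight_smul_def (a : A) (x : epsRight S A M) :
    (a • x : epsRight S A M).val = Tri.iota a * x.val := rfl

/-- The right `A`-action on `Bε` via `x • a = x ι(a)`. -/
instance : Module Aᵐᵒᵖ (epsLeft S A M) where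
  smul a x := ⟨x.val * Tri.iota a.unop, by
    have hx := x.2
    simp only [epsLeft, Submodule.mem_mk, AddSubmonoid.mem_mk, AddSubsemigroup.mem_mk,
      Set.mem_setOf_eq] at *
    rw [mul_assoc, iota_mul_eps]⟩
  one_smul x := Subtype.ext (by
    show x.val * Tri.iota (1 : A) = x.val
    rw [iota_one]; exact x.2)
  mul_smul a b x := Subtype.ext (by
    show x.val * Tri.iota (b.unop * a.unop) = (x.val * Tri.iota b.unop) * Tri.iota a.unop
    rw [iota_mul, mul_assoc])
  smul_zero a := Subtype.ext (zero_mul _)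
  smul_add a x y := Subtype.ext (add_mul _ _ _)
  add_smul a b x := Subtype.ext (by
    show x.val * Tri.iota (a.unop + b.unop) = x.val * Tri.iota a.unop + x.val * Tri.iota b.unop
    rw [iota_add, mul_add])
  zero_smul x := Subtype.ext (by
    show x.val * Tri.iota 0 = 0
    rw [iota_zero, mul_zero])

lemma epsLeft_smul_def (a : Aᵐᵒᵖ) (x : epsLeft S A M) :
    (a • x : epsLeft S A M).val = x.val * Tri.iota a.unop := rfl

instance : SMulCommClass A (Tri S M A)ᵐᵒᵖ (epsRight S A M) :=
  ⟨fun a c x => Subtype.ext (by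
    show Tri.iota a * (x.val * c.unop) = (Tri.iota a * x.val) * c.unop
    rw [mul_assoc])⟩

instance : SMulCommClass (Tri S M A)ᵐᵒᵖ A (epsRight S A M) := SMulCommClass.symm _ _ _

instance : SMulCommClass Aᵐᵒᵖ (Tri S M A) (epsLeft S A M) :=
  ⟨fun a c x => Subtype.ext (by
    show (c * x.val) * Tri.iota a.unop = c * (x.val * Tri.iota a.unop)
    rw [mul_assoc])⟩

instance : SMulCommClass (Tri S M A) Aᵐᵒᵖ (epsLeft S A M) := SMulCommClass.symm _ _ _

end Corner

section Corner7

variable (k : Type u) [Field k]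
variable (S : Type u) [Ring S] [Algebra k S] (A : Type u) [Ring A] [Algebra k A]
variable (M : Type u) [AddCommGroup M] [Module k M] [Module A M] [Module Sᵐᵒᵖ M]
variable [SMulCommClass A Sᵐᵒᵖ M] [IsScalarTower k A M] [IsScalarTower k Sᵐᵒᵖ M]

@[simp] lemma Tri.smul_s (c : k) (x : Tri S M A) : (c • x).s = c • x.s := by
  show (Tri.algMap k c * x).s = c • x.s
  show algebraMap k S c * x.s = c • x.s
  rw [← Algebra.smul_def]

@[simp] lemma Tri.smul_m (c : k) (x : Tri S M A) : (c • x).m = c • x.m := by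
  show (Tri.algMap k c * x).m = c • x.m
  show op x.s • (0 : M) + algebraMap k A c • x.m = c • x.m
  rw [smul_zero, zero_add, algebraMap_smul]

@[simp] lemma Tri.smul_a (c : k) (x : Tri S M A) : (c • x).a = c • x.a := by
  show (Tri.algMap k c * x).a = c • x.a
  show algebraMap k A c * x.a = c • x.a
  rw [← Algebra.smul_def]

/-- The embedding of `S` in the upper left corner. -/
def iotaS (s : S) : Tri S M A := ⟨s, 0, 0⟩

@[simp] lemma iotaS_s (s : S) : (iotaS S A M s).s = s := rfl
@[simp] lemma iotaS_m (s : S) : (iotaS S A M s).m = 0 := rfl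
@[simp] lemma iotaS_a (s : S) : (iotaS S A M s).a = 0 := rfl

@[simp] lemma iotaS_mul (s t : S) :
    iotaS S A M (s * t) = iotaS S A M s * iotaS S A M t := by ext <;> simp

@[simp] lemma iotaS_add (s t : S) :
    iotaS S A M (s + t) = iotaS S A M s + iotaS S A M t := by ext <;> simp

@[simp] lemma iotaS_zero : iotaS S A M (0 : S) = 0 := by ext <;> simp

lemma iotaS_one : iotaS S A M (1 : S) = 1 - Tri.eps := by ext <;> simp

lemma iotaS_smul (c : k) (s : S) : iotaS S A M (c • s) = c • iotaS S A M s := by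
  ext <;> simp

lemma oneEps_mul_iotaS (s : S) :
    (1 - Tri.eps : Tri S M A) * iotaS S A M s = iotaS S A M s := by ext <;> simp

lemma iotaS_mul_oneEps (s : S) :
    iotaS S A M s * (1 - Tri.eps : Tri S M A) = iotaS S A M s := by ext <;> simp

/-- The left `S`-action on `(1-ε)B` via `s • x = ι_S(s) x`. -/
instance : Module S (oneEpsRight S A M) where
  smul s x := ⟨iotaS S A M s * x.val, by
    have hx := x.2
    simp only [oneEpsRight, Submodule.mem_mk, AddSubmonoid.mem_mk, AddSubsemigroup.mem_mk,
      Set.mem_setOf_eq] at *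
    rw [← mul_assoc, oneEps_mul_iotaS]⟩
  one_smul x := Subtype.ext (by
    show iotaS S A M 1 * x.val = x.val
    rw [iotaS_one]; exact x.2)
  mul_smul s t x := Subtype.ext (by
    show iotaS S A M (s * t) * x.val = iotaS S A M s * (iotaS S A M t * x.val)
    rw [iotaS_mul, mul_assoc])
  smul_zero s := Subtype.ext (mul_zero _)
  smul_add s x y := Subtype.ext (mul_add _ _ _)
  add_smul s t x := Subtype.ext (by
    show iotaS S A M (s + t) * x.val = iotaS S A M s * x.val + iotaS S A M t * x.val
    rw [iotaS_add, add_mul])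
  zero_smul x := Subtype.ext (by
    show iotaS S A M 0 * x.val = 0
    rw [iotaS_zero, zero_mul])

lemma oneEpsRight_smul_def (s : S) (x : oneEpsRight S A M) :
    (s • x : oneEpsRight S A M).val = iotaS S A M s * x.val := rfl

instance : SMulCommClass S (Tri S M A)ᵐᵒᵖ (oneEpsRight S A M) :=
  ⟨fun s c x => Subtype.ext (by
    show iotaS S A M s * (x.val * c.unop) = (iotaS S A M s * x.val) * c.unop
    rw [mul_assoc])⟩

instance : SMulCommClass (Tri S M A)ᵐᵒᵖ S (oneEpsRight S A M) := SMulCommClass.symm _ _ _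

instance : IsScalarTower k S (oneEpsRight S A M) :=
  ⟨fun c s x => Subtype.ext (by
    show iotaS S A M (c • s) * x.val = c • (iotaS S A M s * x.val)
    rw [iotaS_smul, smul_mul_assoc])⟩

/-- The left ideal `B(1-ε)` of `B = Tri S M A`, as a left `B`-module. -/
def oneEpsLeft : Submodule (Tri S M A) (Tri S M A) where
  carrier := {x | x * (1 - Tri.eps) = x}
  add_mem' := fun {a} {b} ha hb => by
    simp only [Set.mem_setOf_eq] at *
    rw [add_mul, ha, hb]
  zero_mem' := by simp
  smul_mem' := fun c {x} hx => by
    simp only [Set.mem_setOf_eq, smul_eq_mul] at *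
    rw [mul_assoc, hx]

/-- The right `S`-action on `B(1-ε)` via `x • s = x ι_S(s)`. -/
instance : Module Sᵐᵒᵖ (oneEpsLeft S A M) where
  smul s x := ⟨x.val * iotaS S A M s.unop, by
    have hx := x.2
    simp only [oneEpsLeft, Submodule.mem_mk, AddSubmonoid.mem_mk, AddSubsemigroup.mem_mk,
      Set.mem_setOf_eq] at *
    rw [mul_assoc, iotaS_mul_oneEps]⟩
  one_smul x := Subtype.ext (by
    show x.val * iotaS S A M 1 = x.val
    rw [iotaS_one]; exact x.2)
  mul_smul s t x := Subtype.ext (by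
    show x.val * iotaS S A M (t.unop * s.unop) = (x.val * iotaS S A M t.unop) * iotaS S A M s.unop
    rw [iotaS_mul, mul_assoc])
  smul_zero s := Subtype.ext (zero_mul _)
  smul_add s x y := Subtype.ext (add_mul _ _ _)
  add_smul s t x := Subtype.ext (by
    show x.val * iotaS S A M (s.unop + t.unop) = x.val * iotaS S A M s.unop + x.val * iotaS S A M t.unop
    rw [iotaS_add, mul_add])
  zero_smul x := Subtype.ext (by
    show x.val * iotaS S A M 0 = 0
    rw [iotaS_zero, mul_zero])

instance : SMulCommClass Sᵐᵒᵖ (Tri S M A) (oneEpsLeft S A M) :=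
  ⟨fun s c x => Subtype.ext (by
    show (c * x.val) * iotaS S A M s.unop = c * (x.val * iotaS S A M s.unop)
    rw [mul_assoc])⟩

instance : SMulCommClass (Tri S M A) Sᵐᵒᵖ (oneEpsLeft S A M) := SMulCommClass.symm _ _ _

instance : IsScalarTower k Sᵐᵒᵖ (oneEpsLeft S A M) :=
  ⟨fun c s x => Subtype.ext (by
    show x.val * iotaS S A M (c • s).unop = c • (x.val * iotaS S A M s.unop)
    rw [MulOpposite.unop_smul, iotaS_smul, mul_smul_comm])⟩

instance : IsScalarTower k Aᵐᵒᵖ (epsLeft S A M) :=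
  ⟨fun c a x => Subtype.ext (by
    show x.val * Tri.iota (c • a).unop = c • (x.val * Tri.iota a.unop)
    have : (Tri.iota ((c • a).unop) : Tri S M A) = c • Tri.iota a.unop := by
      ext <;> simp [MulOpposite.unop_smul]
    rw [this, mul_smul_comm])⟩

instance : IsScalarTower k A (epsRight S A M) :=
  ⟨fun c a x => Subtype.ext (by
    show Tri.iota (c • a) * x.val = c • (Tri.iota a * x.val)
    have : (Tri.iota (c • a) : Tri S M A) = c • Tri.iota a := by ext <;> simp
    rw [this, smul_mul_assoc])⟩

/-- The projection `B → A`, as a `k`-algebra homomorphism. -/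
def projA : Tri S M A →ₐ[k] A where
  toFun x := x.a
  map_one' := rfl
  map_mul' x y := rfl
  map_zero' := rfl
  map_add' x y := rfl
  commutes' c := rfl

/-- The projection `B → S`, as a `k`-algebra homomorphism. -/
def projS : Tri S M A →ₐ[k] S where
  toFun x := x.s
  map_one' := rfl
  map_mul' x y := rfl
  map_zero' := rfl
  map_add' x y := rfl
  commutes' c := rfl

/-- The algebra homomorphism `Φ : B ⊗ Bᵒᵖ → A ⊗ Sᵒᵖ` along which the functor `F` is the
restriction of scalars. -/
def Phi : (Tri S M A ⊗[k] (Tri S M A)ᵐᵒᵖ) →ₐ[k] (A ⊗[k] Sᵐᵒᵖ) :=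
  Algebra.TensorProduct.map (projA k S A M) (AlgHom.op (projS k S A M))

end Corner7

attribute [local instance low] NC.leftModule NC.rightModule

section

open CategoryTheory

variable (k : Type u) [Field k]
variable (S : Type u) [Ring S] [Algebra k S] [FiniteDimensional k S]
variable (A : Type u) [Ring A] [Algebra k A] [FiniteDimensional k A]
variable (M : Type u) [AddCommGroup M] [Module k M] [Module A M] [Module Sᵐᵒᵖ M]
variable [SMulCommClass A Sᵐᵒᵖ M] [IsScalarTower k A M] [IsScalarTower k Sᵐᵒᵖ M]
variable [FiniteDimensional k M]

instance : SMulCommClass Sᵐᵒᵖ A M := SMulCommClass.symm _ _ _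

variable (Y : Type u) [AddCommGroup Y] [Module k Y] [Module S Y] [Module Sᵐᵒᵖ Y] [SMulCommClass S Sᵐᵒᵖ Y] [SMulCommClass Sᵐᵒᵖ S Y] [IsScalarTower k S Y] [IsScalarTower k Sᵐᵒᵖ Y]

/-- The underlying module of `G(Y) = [[Y, 0], [M ⊗_S Y, 0]]`. -/
abbrev GObj := Y × NC.Tensor k S M Y

/-- The left `B`-module structure on `G(Y) = [[Y,0],[M ⊗_S Y,0]]` given by matrix
multiplication: `[[s,0],[m,a]] • (y, t) = (s • y, m ⊗ y + a • t)`. -/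
instance gLeft : Module (Tri S M A) (GObj k S M Y) where
  smul b p := (b.s • p.1, NC.mk k S b.m p.1 + b.a • p.2)
  one_smul p := by
    show ((1 : S) • p.1, NC.mk k S (0 : M) p.1 + (1 : A) • p.2) = p
    rw [one_smul, one_smul, NC.mk_zero_left, zero_add]
  mul_smul b c p := by
    show ((b.s * c.s) • p.1,
        NC.mk k S (op c.s • b.m + b.a • c.m) p.1 + (b.a * c.a) • p.2)
      = (b.s • c.s • p.1,
        NC.mk k S b.m (c.s • p.1) + b.a • (NC.mk k S c.m p.1 + c.a • p.2))
    rw [mul_smul, NC.mk_add_left, NC.mk_balanced, smul_add, NC.smul_mk_left, mul_smul]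
    exact Prod.ext rfl (by abel)
  smul_zero b := by
    show (b.s • (0 : Y), NC.mk k S b.m (0 : Y) + b.a • (0 : NC.Tensor k S M Y)) = 0
    rw [smul_zero, smul_zero, NC.mk_zero_right, zero_add]
    rfl
  smul_add b p q := by
    show (b.s • (p.1 + q.1), NC.mk k S b.m (p.1 + q.1) + b.a • (p.2 + q.2))
      = (b.s • p.1 + b.s • q.1,
        (NC.mk k S b.m p.1 + b.a • p.2) + (NC.mk k S b.m q.1 + b.a • q.2))
    rw [smul_add, NC.mk_add_right, smul_add]
    exact Prod.ext rfl (by abel)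
  add_smul b c p := by
    show ((b.s + c.s) • p.1, NC.mk k S (b.m + c.m) p.1 + (b.a + c.a) • p.2)
      = (b.s • p.1 + c.s • p.1,
        (NC.mk k S b.m p.1 + b.a • p.2) + (NC.mk k S c.m p.1 + c.a • p.2))
    rw [add_smul, NC.mk_add_left, add_smul]
    exact Prod.ext rfl (by abel)
  zero_smul p := by
    show ((0 : S) • p.1, NC.mk k S (0 : M) p.1 + (0 : A) • p.2) = 0
    rw [zero_smul, zero_smul, NC.mk_zero_left, zero_add]
    rfl

lemma gLeft_smul_def (b : Tri S M A) (p : GObj k S M Y) :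
    b • p = (b.s • p.1, NC.mk k S b.m p.1 + b.a • p.2) := rfl

/-- The right `B`-module structure on `G(Y)`, via the projection `B → S`. -/
instance gRight : Module (Tri S M A)ᵐᵒᵖ (GObj k S M Y) :=
  Module.compHom _ ((RingHom.op (projS k S A M).toRingHom) :
    (Tri S M A)ᵐᵒᵖ →+* Sᵐᵒᵖ)

lemma gRight_smul_def (b : (Tri S M A)ᵐᵒᵖ) (p : GObj k S M Y) :
    b • p = (op b.unop.s • p.1, op b.unop.s • p.2) := rfl

instance : SMulCommClass (Tri S M A) (Tri S M A)ᵐᵒᵖ (GObj k S M Y) :=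
  ⟨fun b c p => by
    rw [gRight_smul_def, gLeft_smul_def, gRight_smul_def, gLeft_smul_def]
    refine Prod.ext (smul_comm _ _ _) ?_
    show NC.mk k S b.m (op c.unop.s • p.1) + b.a • (op c.unop.s • p.2)
      = op c.unop.s • (NC.mk k S b.m p.1 + b.a • p.2)
    rw [smul_add, NC.smul_mk_right, smul_comm]⟩

instance : IsScalarTower k (Tri S M A) (GObj k S M Y) :=
  ⟨fun c b p => by
    rw [gLeft_smul_def, gLeft_smul_def]
    have h1 : (c • b).s • p.1 = c • (b.s • p.1) := by rw [Tri.smul_s, smul_assoc]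
    have h2 : NC.mk k S (c • b).m p.1 + (c • b).a • p.2
        = c • (NC.mk k S b.m p.1 + b.a • p.2) := by
      rw [Tri.smul_m, Tri.smul_a, smul_add, ← NC.smul_mk_k, smul_assoc]
    exact Prod.ext h1 h2⟩

instance : IsScalarTower k (Tri S M A)ᵐᵒᵖ (GObj k S M Y) :=
  ⟨fun c b p => by
    rw [gRight_smul_def, gRight_smul_def]
    have hs : (op ((c • b).unop.s) : Sᵐᵒᵖ) = c • op b.unop.s := by
      rw [MulOpposite.unop_smul, Tri.smul_s]
      rfl
    rw [hs]
    exact Prod.ext (smul_assoc _ _ _) (smul_assoc _ _ _)⟩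

/-- The `S ⊗ Sᵒᵖ`-module structure on the `(S,S)`-bimodule `Y`. -/
def envY : Module (S ⊗[k] Sᵐᵒᵖ) Y := TensorProduct.Algebra.module

/-- The `B ⊗ Bᵒᵖ`-module structure on `G(Y)`. -/
def envGY : Module (Tri S M A ⊗[k] (Tri S M A)ᵐᵒᵖ) (GObj k S M Y) :=
  TensorProduct.Algebra.module


/-! ### Auxiliary constructions for Statement 8 -/

section Aux1

/-- The element `[[0,0],[m,0]]` of `B`. -/
def sAbM (m : M) : Tri S M A := ⟨0, m, 0⟩

@[simp] lemma sAbM_s (m : M) : (sAbM (S := S) (A := A) (M := M) m).s = 0 := rfl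
@[simp] lemma sAbM_m (m : M) : (sAbM (S := S) (A := A) (M := M) m).m = m := rfl
@[simp] lemma sAbM_a (m : M) : (sAbM (S := S) (A := A) (M := M) m).a = 0 := rfl

/-- The generator `1-ε` of `B(1-ε)`. -/
def sAeL : oneEpsLeft S A M := ⟨iotaS S A M 1, by exact iotaS_mul_oneEps S A M 1⟩

/-- The generator `1-ε` of `(1-ε)B`. -/
def sAfR : oneEpsRight S A M := ⟨iotaS S A M 1, by exact oneEps_mul_iotaS S A M 1⟩

/-- The element `[[0,0],[m,0]]` of `B(1-ε)`. -/
def sAuM (m : M) : oneEpsLeft S A M :=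
  ⟨sAbM (S := S) (A := A) (M := M) m, by
    show sAbM (S := S) (A := A) (M := M) m * (1 - Tri.eps) = sAbM (S := S) (A := A) (M := M) m
    ext <;> simp⟩

@[simp] lemma sAeL_val : ((sAeL (S := S) (A := A) (M := M)) : Tri S M A) = iotaS S A M 1 := rfl
@[simp] lemma sAfR_val : ((sAfR (S := S) (A := A) (M := M)) : Tri S M A) = iotaS S A M 1 := rfl
@[simp] lemma sAuM_val (m : M) :
    ((sAuM (S := S) (A := A) (M := M) m) : Tri S M A) = sAbM (S := S) (A := A) (M := M) m := rfl

lemma sA_oneEpsLeft_a (u : oneEpsLeft S A M) : (u : Tri S M A).a = 0 := by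
  have h : (u : Tri S M A) * (1 - Tri.eps) = (u : Tri S M A) := u.2
  have h2 := congrArg Tri.a h
  simpa using h2.symm

lemma sA_oneEpsRight_val (v : oneEpsRight S A M) :
    (v : Tri S M A) = iotaS S A M (v : Tri S M A).s := by
  have h : (1 - Tri.eps) * (v : Tri S M A) = (v : Tri S M A) := v.2
  have hm := congrArg Tri.m h
  have ha := congrArg Tri.a h
  simp only [Tri.mul_m, Tri.mul_a, Tri.sub_m, Tri.sub_a, Tri.one_m, Tri.one_a, Tri.eps_m,
    Tri.eps_a, sub_zero, sub_self, smul_zero, zero_smul, add_zero, zero_add, zero_mul] at hm ha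
  ext
  · simp
  · simp [← hm]
  · simp [← ha]

-- coercion lemmas for the various scalar actions on the corner ideals
lemma sA_smulSop_val (s : S) (u : oneEpsLeft S A M) :
    ((op s • u : oneEpsLeft S A M) : Tri S M A) = (u : Tri S M A) * iotaS S A M s := rfl

lemma sA_smulS_val (s : S) (v : oneEpsRight S A M) :
    ((s • v : oneEpsRight S A M) : Tri S M A) = iotaS S A M s * (v : Tri S M A) := rfl

lemma sA_smulB_val (b : Tri S M A) (u : oneEpsLeft S A M) :
    ((b • u : oneEpsLeft S A M) : Tri S M A) = b * (u : Tri S M A) := rfl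

lemma sA_smulBop_val (b : (Tri S M A)ᵐᵒᵖ) (v : oneEpsRight S A M) :
    ((b • v : oneEpsRight S A M) : Tri S M A) = (v : Tri S M A) * b.unop := rfl

lemma sA_smulk_valL (c : k) (u : oneEpsLeft S A M) :
    ((c • u : oneEpsLeft S A M) : Tri S M A) = c • (u : Tri S M A) := rfl

lemma sA_smulk_valR (c : k) (v : oneEpsRight S A M) :
    ((c • v : oneEpsRight S A M) : Tri S M A) = c • (v : Tri S M A) := rfl

/-- Decomposition of an element of `B(1-ε)`. -/
lemma sA_decompL (u : oneEpsLeft S A M) :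
    u = (op (u : Tri S M A).s • sAeL (S := S) (A := A) (M := M)) + sAuM (S := S) (A := A) (M := M) (u : Tri S M A).m := by
  refine Subtype.ext ?_
  rw [Submodule.coe_add, sA_smulSop_val, sAeL_val, sAuM_val]
  ext
  · simp
  · simp
  · simp [sA_oneEpsLeft_a (S := S) (A := A) (M := M) u]

/-- Every element of `(1-ε)B` is `v.s • fR`. -/
lemma sA_decompR (v : oneEpsRight S A M) :
    v = (v : Tri S M A).s • sAfR (S := S) (A := A) (M := M) := by
  refine Subtype.ext ?_
  rw [sA_smulS_val, sAfR_val]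
  conv_lhs => rw [sA_oneEpsRight_val (S := S) (A := A) (M := M) v]
  rw [← iotaS_mul]
  simp

/-- The bilinear map underlying `sAH`. -/
def sAphi : oneEpsLeft S A M →ₗ[k] Y →ₗ[k] GObj k S M Y where
  toFun u :=
    { toFun := fun y => ((u : Tri S M A).s • y, NC.mk k S (u : Tri S M A).m y)
      map_add' := fun y z => by
        simp only [smul_add, NC.mk_add_right, Prod.mk_add_mk]
      map_smul' := fun c y => by
        simp only [RingHom.id_apply, Prod.smul_mk]
        rw [smul_comm, ← NC.smul_mk_k' k S c] }
  map_add' u v := by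
    refine LinearMap.ext fun y => ?_
    simp only [LinearMap.coe_mk, AddHom.coe_mk, LinearMap.add_apply]
    rw [Submodule.coe_add, Tri.add_s, Tri.add_m, add_smul, NC.mk_add_left, Prod.mk_add_mk]
  map_smul' c u := by
    refine LinearMap.ext fun y => ?_
    simp only [LinearMap.coe_mk, AddHom.coe_mk, RingHom.id_apply, LinearMap.smul_apply,
      Prod.smul_mk]
    rw [sA_smulk_valL, Tri.smul_s, Tri.smul_m, smul_assoc, ← NC.smul_mk_k k S c]

lemma sAphi_balanced (s : S) (u : oneEpsLeft S A M) (y : Y) :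
    sAphi (k := k) (S := S) (A := A) (M := M) (Y := Y) (op s • u) y
      = sAphi (k := k) (S := S) (A := A) (M := M) (Y := Y) u (s • y) := by
  show (((op s • u : oneEpsLeft S A M) : Tri S M A).s • y,
      NC.mk k S ((op s • u : oneEpsLeft S A M) : Tri S M A).m y)
    = ((u : Tri S M A).s • (s • y), NC.mk k S (u : Tri S M A).m (s • y))
  rw [sA_smulSop_val]
  refine Prod.ext ?_ ?_
  · simp [mul_smul]
  · show NC.mk k S ((u : Tri S M A) * iotaS S A M s).m y = _
    rw [Tri.mul_m]
    simp only [iotaS_s, iotaS_m, smul_zero, add_zero]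
    rw [← NC.mk_balanced k S s]

/-- `H : B(1-ε) ⊗_S Y →ₗ[k] G(Y)`. -/
def sAH : NC.Tensor k S (oneEpsLeft S A M) Y →ₗ[k] GObj k S M Y :=
  NC.lift k S (sAphi (k := k) (S := S) (A := A) (M := M) (Y := Y))
    (fun s u y => sAphi_balanced (k := k) (S := S) (A := A) (M := M) (Y := Y) s u y)

lemma sAH_mk (u : oneEpsLeft S A M) (y : Y) :
    sAH (k := k) (S := S) (A := A) (M := M) (Y := Y) (NC.mk k S u y)
      = ((u : Tri S M A).s • y, NC.mk k S (u : Tri S M A).m y) := rfl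

lemma sAH_smulR (s : S) (X : NC.Tensor k S (oneEpsLeft S A M) Y) :
    sAH (k := k) (S := S) (A := A) (M := M) (Y := Y) (op s • X)
      = op s • sAH (k := k) (S := S) (A := A) (M := M) (Y := Y) X := by
  induction X using NC.induction_on with
  | zero => simp
  | basic u y =>
      rw [NC.smul_mk_right, sAH_mk, sAH_mk]
      refine Prod.ext ?_ ?_
      · show (u : Tri S M A).s • (op s • y) = op s • ((u : Tri S M A).s • y)
        rw [smul_comm]
      · show NC.mk k S (u : Tri S M A).m (op s • y) = op s • NC.mk k S (u : Tri S M A).m y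
        rw [NC.smul_mk_right]
  | add x y hx hy => rw [smul_add, map_add, map_add, hx, hy, smul_add]

/-- `F : (B(1-ε) ⊗_S Y) →ₗ[k] (1-ε)B →ₗ[k] G(Y)`. -/
def sAF : NC.Tensor k S (oneEpsLeft S A M) Y →ₗ[k] oneEpsRight S A M →ₗ[k] GObj k S M Y where
  toFun X :=
    { toFun := fun v => op (v : Tri S M A).s •
        sAH (k := k) (S := S) (A := A) (M := M) (Y := Y) X
      map_add' := fun v w => by
        show op ((v + w : oneEpsRight S A M) : Tri S M A).s •
            sAH (k := k) (S := S) (A := A) (M := M) (Y := Y) X = _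
        rw [show (op ((v + w : oneEpsRight S A M) : Tri S M A).s : Sᵐᵒᵖ)
            = op (v : Tri S M A).s + op (w : Tri S M A).s from rfl, add_smul]
      map_smul' := fun c v => by
        simp only [RingHom.id_apply]
        show op ((c • v : oneEpsRight S A M) : Tri S M A).s •
            sAH (k := k) (S := S) (A := A) (M := M) (Y := Y) X = _
        have h2 : (op ((c • v : oneEpsRight S A M) : Tri S M A).s : Sᵐᵒᵖ)
            = c • op (v : Tri S M A).s := by
          rw [sA_smulk_valR, Tri.smul_s]; rfl
        rw [h2, smul_assoc] }
  map_add' X X' := by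
    refine LinearMap.ext fun v => ?_
    simp only [LinearMap.coe_mk, AddHom.coe_mk, LinearMap.add_apply, map_add, smul_add]
  map_smul' c X := by
    refine LinearMap.ext fun v => ?_
    simp only [LinearMap.coe_mk, AddHom.coe_mk, RingHom.id_apply, LinearMap.smul_apply,
      map_smul]
    rw [smul_comm]

lemma sAF_balanced (s : S) (X : NC.Tensor k S (oneEpsLeft S A M) Y) (v : oneEpsRight S A M) :
    sAF (k := k) (S := S) (A := A) (M := M) (Y := Y) (op s • X) v
      = sAF (k := k) (S := S) (A := A) (M := M) (Y := Y) X (s • v) := by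
  show op (v : Tri S M A).s • sAH (k := k) (S := S) (A := A) (M := M) (Y := Y) (op s • X)
    = op ((s • v : oneEpsRight S A M) : Tri S M A).s •
        sAH (k := k) (S := S) (A := A) (M := M) (Y := Y) X
  rw [sAH_smulR, sA_smulS_val, Tri.mul_s, iotaS_s, op_mul, mul_smul]

/-- `η : B(1-ε) ⊗_S Y ⊗_S (1-ε)B →ₗ[k] G(Y)`. -/
def sAeta :
    NC.Tensor k S (NC.Tensor k S (oneEpsLeft S A M) Y) (oneEpsRight S A M) →ₗ[k]
      GObj k S M Y :=
  NC.lift k S (sAF (k := k) (S := S) (A := A) (M := M) (Y := Y))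
    (fun s X v => sAF_balanced (k := k) (S := S) (A := A) (M := M) (Y := Y) s X v)

lemma sAeta_mk (X : NC.Tensor k S (oneEpsLeft S A M) Y) (v : oneEpsRight S A M) :
    sAeta (k := k) (S := S) (A := A) (M := M) (Y := Y) (NC.mk k S X v)
      = op (v : Tri S M A).s • sAH (k := k) (S := S) (A := A) (M := M) (Y := Y) X := rfl

lemma sAeta_mk2 (u : oneEpsLeft S A M) (y : Y) (v : oneEpsRight S A M) :
    sAeta (k := k) (S := S) (A := A) (M := M) (Y := Y) (NC.mk k S (NC.mk k S u y) v)
      = op (v : Tri S M A).s •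
          (((u : Tri S M A).s • y, NC.mk k S (u : Tri S M A).m y) : GObj k S M Y) := rfl

end Aux1


section Aux2

/-- `ψ₁ : Y →ₗ[k] B(1-ε) ⊗_S Y ⊗_S (1-ε)B`. -/
def sApsi1 : Y →ₗ[k]
    NC.Tensor k S (NC.Tensor k S (oneEpsLeft S A M) Y) (oneEpsRight S A M) where
  toFun y := NC.mk k S (NC.mk k S (sAeL (S := S) (A := A) (M := M)) y)
      (sAfR (S := S) (A := A) (M := M))
  map_add' y z := by simp only [NC.mk_add_right, NC.mk_add_left]
  map_smul' c y := by
    simp only [RingHom.id_apply]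
    rw [← NC.smul_mk_k' k S c, ← NC.smul_mk_k k S c]

/-- The bilinear map underlying `τ`. -/
def sAtaub : M →ₗ[k] Y →ₗ[k]
    NC.Tensor k S (NC.Tensor k S (oneEpsLeft S A M) Y) (oneEpsRight S A M) where
  toFun m :=
    { toFun := fun y => NC.mk k S (NC.mk k S (sAuM (S := S) (A := A) (M := M) m) y)
        (sAfR (S := S) (A := A) (M := M))
      map_add' := fun y z => by simp only [NC.mk_add_right, NC.mk_add_left]
      map_smul' := fun c y => by
        simp only [RingHom.id_apply]
        rw [← NC.smul_mk_k' k S c, ← NC.smul_mk_k k S c] }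
  map_add' m m' := by
    refine LinearMap.ext fun y => ?_
    simp only [LinearMap.coe_mk, AddHom.coe_mk, LinearMap.add_apply]
    have h : sAuM (S := S) (A := A) (M := M) (m + m')
        = sAuM (S := S) (A := A) (M := M) m + sAuM (S := S) (A := A) (M := M) m' := by
      refine Subtype.ext ?_
      rw [Submodule.coe_add]
      ext <;> simp
    rw [h, NC.mk_add_left, NC.mk_add_left]
  map_smul' c m := by
    refine LinearMap.ext fun y => ?_
    simp only [LinearMap.coe_mk, AddHom.coe_mk, RingHom.id_apply, LinearMap.smul_apply]
    have h : sAuM (S := S) (A := A) (M := M) (c • m)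
        = c • sAuM (S := S) (A := A) (M := M) m := by
      refine Subtype.ext ?_
      rw [sA_smulk_valL]
      ext <;> simp
    rw [h, ← NC.smul_mk_k k S c, ← NC.smul_mk_k k S c]

lemma sAtaub_balanced (s : S) (m : M) (y : Y) :
    sAtaub (k := k) (S := S) (A := A) (M := M) (Y := Y) (op s • m) y
      = sAtaub (k := k) (S := S) (A := A) (M := M) (Y := Y) m (s • y) := by
  show NC.mk k S (NC.mk k S (sAuM (S := S) (A := A) (M := M) (op s • m)) y) _ = _
  have h : sAuM (S := S) (A := A) (M := M) (op s • m)
      = op s • sAuM (S := S) (A := A) (M := M) m := by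
    refine Subtype.ext ?_
    rw [sA_smulSop_val]
    ext <;> simp
  rw [h, NC.mk_balanced k S s]
  rfl

/-- `τ : M ⊗_S Y →ₗ[k] B(1-ε) ⊗_S Y ⊗_S (1-ε)B`. -/
def sAtau : NC.Tensor k S M Y →ₗ[k]
    NC.Tensor k S (NC.Tensor k S (oneEpsLeft S A M) Y) (oneEpsRight S A M) :=
  NC.lift k S (sAtaub (k := k) (S := S) (A := A) (M := M) (Y := Y))
    (fun s m y => sAtaub_balanced (k := k) (S := S) (A := A) (M := M) (Y := Y) s m y)

lemma sAtau_mk (m : M) (y : Y) :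
    sAtau (k := k) (S := S) (A := A) (M := M) (Y := Y) (NC.mk k S m y)
      = NC.mk k S (NC.mk k S (sAuM (S := S) (A := A) (M := M) m) y)
          (sAfR (S := S) (A := A) (M := M)) := rfl

lemma sAeta_psi1 (y : Y) :
    sAeta (k := k) (S := S) (A := A) (M := M) (Y := Y)
      (sApsi1 (k := k) (S := S) (A := A) (M := M) (Y := Y) y) = ((y, 0) : GObj k S M Y) := by
  show sAeta (k := k) (S := S) (A := A) (M := M) (Y := Y)
      (NC.mk k S (NC.mk k S (sAeL (S := S) (A := A) (M := M)) y)
        (sAfR (S := S) (A := A) (M := M))) = _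
  rw [sAeta_mk2]
  rw [show ((sAfR (S := S) (A := A) (M := M) : oneEpsRight S A M) : Tri S M A).s = (1 : S)
      from rfl,
    show ((sAeL (S := S) (A := A) (M := M) : oneEpsLeft S A M) : Tri S M A).s = (1 : S)
      from rfl,
    show ((sAeL (S := S) (A := A) (M := M) : oneEpsLeft S A M) : Tri S M A).m = (0 : M)
      from rfl]
  rw [op_one, one_smul, one_smul, NC.mk_zero_left]

lemma sAeta_tau (t : NC.Tensor k S M Y) :
    sAeta (k := k) (S := S) (A := A) (M := M) (Y := Y)
      (sAtau (k := k) (S := S) (A := A) (M := M) (Y := Y) t) = ((0, t) : GObj k S M Y) := by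
  induction t using NC.induction_on with
  | zero => rw [map_zero, map_zero]; rfl
  | basic m y =>
      rw [sAtau_mk, sAeta_mk2]
      rw [show ((sAfR (S := S) (A := A) (M := M) : oneEpsRight S A M) : Tri S M A).s = (1 : S)
          from rfl,
        show ((sAuM (S := S) (A := A) (M := M) m : oneEpsLeft S A M) : Tri S M A).s = (0 : S)
          from rfl,
        show ((sAuM (S := S) (A := A) (M := M) m : oneEpsLeft S A M) : Tri S M A).m = m
          from rfl]
      rw [op_one, one_smul, zero_smul]
  | add x y hx hy =>
      rw [map_add, map_add, hx, hy]
      rw [Prod.mk_add_mk, add_zero]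

/-- The inverse map `G(Y) → B(1-ε) ⊗_S Y ⊗_S (1-ε)B`. -/
def sAinv : GObj k S M Y →+
    NC.Tensor k S (NC.Tensor k S (oneEpsLeft S A M) Y) (oneEpsRight S A M) where
  toFun p := sApsi1 (k := k) (S := S) (A := A) (M := M) (Y := Y) p.1
      + sAtau (k := k) (S := S) (A := A) (M := M) (Y := Y) p.2
  map_zero' := by simp
  map_add' p q := by
    simp only [Prod.fst_add, Prod.snd_add, map_add]
    abel

lemma sA_inv_eta (t : NC.Tensor k S (NC.Tensor k S (oneEpsLeft S A M) Y) (oneEpsRight S A M)) :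
    sAinv (k := k) (S := S) (A := A) (M := M) (Y := Y)
      (sAeta (k := k) (S := S) (A := A) (M := M) (Y := Y) t) = t := by
  induction t using NC.induction_on with
  | zero => rw [map_zero, map_zero]
  | basic X v =>
      induction X using NC.induction_on with
      | zero => rw [NC.mk_zero_left, map_zero, map_zero]
      | basic u y =>
          rw [sAeta_mk2]
          show sApsi1 (k := k) (S := S) (A := A) (M := M) (Y := Y)
              (op ((v : Tri S M A)).s • ((u : Tri S M A).s • y))
            + sAtau (k := k) (S := S) (A := A) (M := M) (Y := Y)
              (op ((v : Tri S M A)).s • NC.mk k S (u : Tri S M A).m y) = _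
          rw [NC.smul_mk_right k S M S]
          show NC.mk k S (NC.mk k S (sAeL (S := S) (A := A) (M := M))
              (op ((v : Tri S M A)).s • ((u : Tri S M A).s • y)))
              (sAfR (S := S) (A := A) (M := M))
            + NC.mk k S (NC.mk k S (sAuM (S := S) (A := A) (M := M) (u : Tri S M A).m)
              (op ((v : Tri S M A)).s • y)) (sAfR (S := S) (A := A) (M := M)) = _
          conv_rhs => rw [sA_decompR (S := S) (A := A) (M := M) v]
          rw [← NC.mk_balanced k S]
          conv_rhs => rw [NC.smul_mk_right k S (oneEpsLeft S A M) S,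
            sA_decompL (S := S) (A := A) (M := M) u]
          rw [NC.mk_add_left k S, NC.mk_balanced k S, NC.mk_add_left k S]
          rw [smul_comm (op ((v : Tri S M A)).s) ((u : Tri S M A).s) y]
      | add X1 X2 h1 h2 =>
          rw [NC.mk_add_left k S, map_add, map_add, h1, h2]
  | add x y hx hy => rw [map_add, map_add, hx, hy]

lemma sA_eta_inv (p : GObj k S M Y) :
    sAeta (k := k) (S := S) (A := A) (M := M) (Y := Y)
      (sAinv (k := k) (S := S) (A := A) (M := M) (Y := Y) p) = p := by
  show sAeta (k := k) (S := S) (A := A) (M := M) (Y := Y)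
      (sApsi1 (k := k) (S := S) (A := A) (M := M) (Y := Y) p.1
        + sAtau (k := k) (S := S) (A := A) (M := M) (Y := Y) p.2) = p
  rw [map_add, sAeta_psi1, sAeta_tau, Prod.mk_add_mk, add_zero, zero_add]

/-- The additive equivalence `B(1-ε) ⊗_S Y ⊗_S (1-ε)B ≃+ G(Y)`. -/
def sAequiv :
    NC.Tensor k S (NC.Tensor k S (oneEpsLeft S A M) Y) (oneEpsRight S A M) ≃+
      GObj k S M Y where
  toFun := sAeta (k := k) (S := S) (A := A) (M := M) (Y := Y)
  invFun := sAinv (k := k) (S := S) (A := A) (M := M) (Y := Y)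
  left_inv := sA_inv_eta (k := k) (S := S) (A := A) (M := M) (Y := Y)
  right_inv := sA_eta_inv (k := k) (S := S) (A := A) (M := M) (Y := Y)
  map_add' := map_add _

lemma sAH_smulB (b : Tri S M A) (X : NC.Tensor k S (oneEpsLeft S A M) Y) :
    sAH (k := k) (S := S) (A := A) (M := M) (Y := Y) (b • X)
      = b • sAH (k := k) (S := S) (A := A) (M := M) (Y := Y) X := by
  induction X using NC.induction_on with
  | zero => rw [smul_zero, map_zero, smul_zero]
  | basic u y =>
      rw [NC.smul_mk_left k S (oneEpsLeft S A M) Y (Tri S M A), sAH_mk, sAH_mk,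
        gLeft_smul_def, sA_smulB_val, Tri.mul_s, Tri.mul_m]
      refine Prod.ext ?_ ?_
      · exact mul_smul _ _ _
      · show NC.mk k S (op (u : Tri S M A).s • b.m + b.a • (u : Tri S M A).m) y = _
        rw [NC.mk_add_left, NC.mk_balanced k S, ← NC.smul_mk_left k S M Y A]
  | add x y hx hy => rw [smul_add, map_add, map_add, hx, hy, smul_add]

lemma sA_comm_BSop (b : Tri S M A) (s : Sᵐᵒᵖ) (p : GObj k S M Y) :
    b • (s • p) = s • (b • p) := by
  rw [gLeft_smul_def, gLeft_smul_def]
  show (b.s • (s • p.1), NC.mk k S b.m (s • p.1) + b.a • (s • p.2))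
    = (s • (b.s • p.1), s • (NC.mk k S b.m p.1 + b.a • p.2))
  refine Prod.ext ?_ ?_
  · exact smul_comm _ _ _
  · show NC.mk k S b.m (s • p.1) + b.a • (s • p.2)
        = s • (NC.mk k S b.m p.1 + b.a • p.2)
    rw [smul_add, NC.smul_mk_right k S M S, smul_comm b.a s p.2]

lemma sAeta_smulB (b : Tri S M A)
    (t : NC.Tensor k S (NC.Tensor k S (oneEpsLeft S A M) Y) (oneEpsRight S A M)) :
    sAeta (k := k) (S := S) (A := A) (M := M) (Y := Y) (b • t)
      = b • sAeta (k := k) (S := S) (A := A) (M := M) (Y := Y) t := by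
  induction t using NC.induction_on with
  | zero => rw [smul_zero, map_zero, smul_zero]
  | basic X v =>
      rw [NC.smul_mk_left k S (NC.Tensor k S (oneEpsLeft S A M) Y) (oneEpsRight S A M)
        (Tri S M A), sAeta_mk, sAeta_mk, sAH_smulB, sA_comm_BSop]
  | add x y hx hy => rw [smul_add, map_add, map_add, hx, hy, smul_add]

lemma sA_gRight_eq (b : (Tri S M A)ᵐᵒᵖ) (p : GObj k S M Y) :
    b • p = (op b.unop.s : Sᵐᵒᵖ) • p := rfl

lemma sAeta_smulBop (b : (Tri S M A)ᵐᵒᵖ)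
    (t : NC.Tensor k S (NC.Tensor k S (oneEpsLeft S A M) Y) (oneEpsRight S A M)) :
    sAeta (k := k) (S := S) (A := A) (M := M) (Y := Y) (b • t)
      = b • sAeta (k := k) (S := S) (A := A) (M := M) (Y := Y) t := by
  induction t using NC.induction_on with
  | zero => rw [smul_zero, map_zero, smul_zero]
  | basic X v =>
      rw [NC.smul_mk_right k S (NC.Tensor k S (oneEpsLeft S A M) Y) (Tri S M A),
        sAeta_mk, sAeta_mk, sA_gRight_eq]
      rw [show ((b • v : oneEpsRight S A M) : Tri S M A).s
          = (v : Tri S M A).s * b.unop.s from rfl]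
      rw [show (op ((v : Tri S M A).s * b.unop.s) : Sᵐᵒᵖ)
          = op b.unop.s * op (v : Tri S M A).s from rfl, mul_smul]
  | add x y hx hy => rw [smul_add, map_add, map_add, hx, hy, smul_add]

end Aux2


section Aux3

/-- `iotaS` as a `k`-linear map. -/
def sAlin1 : S →ₗ[k] Tri S M A where
  toFun := iotaS S A M
  map_add' := iotaS_add S A M
  map_smul' c s := by
    show iotaS S A M (c • s) = (RingHom.id k) c • iotaS S A M s
    rw [RingHom.id_apply, iotaS_smul]

/-- `op ∘ iotaS ∘ unop` as a `k`-linear map. -/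
def sAlin2 : Sᵐᵒᵖ →ₗ[k] (Tri S M A)ᵐᵒᵖ where
  toFun s := op (iotaS S A M s.unop)
  map_add' s t := by
    show op (iotaS S A M (s + t).unop) = op (iotaS S A M s.unop) + op (iotaS S A M t.unop)
    rw [show (unop (s + t) : S) = unop s + unop t from rfl, iotaS_add]
    rfl
  map_smul' c s := by
    show op (iotaS S A M (c • s).unop) = (RingHom.id k) c • op (iotaS S A M s.unop)
    rw [RingHom.id_apply, show (unop (c • s) : S) = c • unop s from rfl, iotaS_smul]
    rfl

/-- The (non-unital) embedding `S ⊗ Sᵒᵖ → B ⊗ Bᵒᵖ`. -/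
def sAI : (S ⊗[k] Sᵐᵒᵖ) →ₗ[k] (Tri S M A ⊗[k] (Tri S M A)ᵐᵒᵖ) :=
  TensorProduct.map (sAlin1 (k := k) (S := S) (A := A) (M := M))
    (sAlin2 (k := k) (S := S) (A := A) (M := M))

lemma sAI_tmul (s : S) (t : Sᵐᵒᵖ) :
    sAI (k := k) (S := S) (A := A) (M := M) (s ⊗ₜ[k] t)
      = iotaS S A M s ⊗ₜ[k] op (iotaS S A M t.unop) := by
  rw [sAI, TensorProduct.map_tmul]; rfl

lemma sAiotaS_mulB (t : S) (b : Tri S M A) :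
    iotaS S A M t * b = iotaS S A M (t * b.s) := by ext <;> simp

lemma sAiotaS_bM (s : S) (m : M) :
    iotaS S A M s * sAbM (S := S) (A := A) (M := M) m = 0 := by ext <;> simp

lemma sAbM_bM (m m' : M) :
    sAbM (S := S) (A := A) (M := M) m * sAbM (S := S) (A := A) (M := M) m' = 0 := by
  ext <;> simp

lemma sAiotaA_iotaS (a : A) (s : S) :
    (Tri.iota a : Tri S M A) * iotaS S A M s = 0 := by ext <;> simp

lemma sAbM_iotaS (m : M) (s : S) :
    sAbM (S := S) (A := A) (M := M) m * iotaS S A M s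
      = sAbM (S := S) (A := A) (M := M) (op s • m) := by ext <;> simp

lemma sAiotaA_bM (a : A) (m : M) :
    (Tri.iota a : Tri S M A) * sAbM (S := S) (A := A) (M := M) m
      = sAbM (S := S) (A := A) (M := M) (a • m) := by ext <;> simp

lemma sAdecompB (b : Tri S M A) :
    b = iotaS S A M b.s + sAbM (S := S) (A := A) (M := M) b.m + Tri.iota b.a := by
  ext <;> simp

lemma sAI_mulL (s : S) (e : S ⊗[k] Sᵐᵒᵖ) :
    sAI (k := k) (S := S) (A := A) (M := M) ((s ⊗ₜ[k] (1 : Sᵐᵒᵖ)) * e)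
      = (iotaS S A M s ⊗ₜ[k] (1 : (Tri S M A)ᵐᵒᵖ)) *
          sAI (k := k) (S := S) (A := A) (M := M) e := by
  induction e using TensorProduct.induction_on with
  | zero => rw [mul_zero, map_zero, mul_zero]
  | tmul x x' =>
      rw [Algebra.TensorProduct.tmul_mul_tmul, sAI_tmul, sAI_tmul,
        Algebra.TensorProduct.tmul_mul_tmul, iotaS_mul, one_mul, one_mul]
  | add e1 e2 h1 h2 => rw [mul_add, map_add, map_add, h1, h2, mul_add]

lemma sAI_mulR (b : Tri S M A) (e : S ⊗[k] Sᵐᵒᵖ) :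
    sAI (k := k) (S := S) (A := A) (M := M) (((1 : S) ⊗ₜ[k] op b.s) * e)
      = ((1 : Tri S M A) ⊗ₜ[k] op b) * sAI (k := k) (S := S) (A := A) (M := M) e := by
  induction e using TensorProduct.induction_on with
  | zero => rw [mul_zero, map_zero, mul_zero]
  | tmul x x' =>
      rw [Algebra.TensorProduct.tmul_mul_tmul, sAI_tmul, sAI_tmul,
        Algebra.TensorProduct.tmul_mul_tmul, one_mul, one_mul]
      congr 1
      rw [show (op b.s * x').unop = x'.unop * b.s from rfl, ← sAiotaS_mulB]
      rfl
  | add e1 e2 h1 h2 => rw [mul_add, map_add, map_add, h1, h2, mul_add]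

lemma sAI_zeroA (a : A) (e : S ⊗[k] Sᵐᵒᵖ) :
    ((Tri.iota a : Tri S M A) ⊗ₜ[k] (1 : (Tri S M A)ᵐᵒᵖ)) *
        sAI (k := k) (S := S) (A := A) (M := M) e = 0 := by
  induction e using TensorProduct.induction_on with
  | zero => rw [map_zero, mul_zero]
  | tmul x x' =>
      rw [sAI_tmul, Algebra.TensorProduct.tmul_mul_tmul, sAiotaA_iotaS,
        TensorProduct.zero_tmul]
  | add e1 e2 h1 h2 => rw [map_add, mul_add, h1, h2, add_zero]

end Aux3

/-- The functor `G` from `(S ⊗ Sᵒᵖ)`-modules to `(B ⊗ Bᵒᵖ)`-modules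
sending `Y` to `[[Y, 0],[M ⊗_S Y, 0]]` is naturally isomorphic to
`B(1−ε) ⊗_S (−) ⊗_S (1−ε)B`; it is fully faithful and sends projective objects to
projective objects. -/
theorem stmt8 :
    (∃ η : ∀ (Y : Type u) [AddCommGroup Y] [Module k Y] [Module S Y] [Module Sᵐᵒᵖ Y] [SMulCommClass S Sᵐᵒᵖ Y] [SMulCommClass Sᵐᵒᵖ S Y] [IsScalarTower k S Y] [IsScalarTower k Sᵐᵒᵖ Y],
        NC.Tensor k S (NC.Tensor k S (oneEpsLeft S A M) Y) (oneEpsRight S A M) ≃+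
          GObj k S M Y,
      (∀ (Y : Type u) [AddCommGroup Y] [Module k Y] [Module S Y] [Module Sᵐᵒᵖ Y] [SMulCommClass S Sᵐᵒᵖ Y] [SMulCommClass Sᵐᵒᵖ S Y] [IsScalarTower k S Y] [IsScalarTower k Sᵐᵒᵖ Y] (b : Tri S M A)
          (t : NC.Tensor k S (NC.Tensor k S (oneEpsLeft S A M) Y) (oneEpsRight S A M)),
        η Y (b • t) = b • η Y t) ∧
      (∀ (Y : Type u) [AddCommGroup Y] [Module k Y] [Module S Y] [Module Sᵐᵒᵖ Y] [SMulCommClass S Sᵐᵒᵖ Y] [SMulCommClass Sᵐᵒᵖ S Y] [IsScalarTower k S Y] [IsScalarTower k Sᵐᵒᵖ Y] (b : (Tri S M A)ᵐᵒᵖ)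
          (t : NC.Tensor k S (NC.Tensor k S (oneEpsLeft S A M) Y) (oneEpsRight S A M)),
        η Y (b • t) = b • η Y t) ∧
      (∀ (Y : Type u) [AddCommGroup Y] [Module k Y] [Module S Y] [Module Sᵐᵒᵖ Y] [SMulCommClass S Sᵐᵒᵖ Y] [SMulCommClass Sᵐᵒᵖ S Y] [IsScalarTower k S Y] [IsScalarTower k Sᵐᵒᵖ Y] (Z : Type u) [AddCommGroup Z] [Module k Z] [Module S Z] [Module Sᵐᵒᵖ Z] [SMulCommClass S Sᵐᵒᵖ Z] [SMulCommClass Sᵐᵒᵖ S Z] [IsScalarTower k S Z] [IsScalarTower k Sᵐᵒᵖ Z]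
          (f : Y →+ Z) (g : GObj k S M Y →+ GObj k S M Z),
        (∀ (s : S) (y : Y), f (s • y) = s • f y) →
        (∀ (s : Sᵐᵒᵖ) (y : Y), f (s • y) = s • f y) →
        (∀ (b : Tri S M A) (p : GObj k S M Y), g (b • p) = b • g p) →
        (∀ (b : (Tri S M A)ᵐᵒᵖ) (p : GObj k S M Y), g (b • p) = b • g p) →
        (∀ y : Y, g (y, 0) = (f y, 0)) →
        (∀ (m : M) (y : Y), g (0, NC.mk k S m y) = (0, NC.mk k S m (f y))) →
        ∀ (u : oneEpsLeft S A M) (y : Y) (v : oneEpsRight S A M),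
          η Z (NC.mk k S (NC.mk k S u (f y)) v)
            = g (η Y (NC.mk k S (NC.mk k S u y) v)))) ∧
    (∀ (Y : Type u) [AddCommGroup Y] [Module k Y] [Module S Y] [Module Sᵐᵒᵖ Y] [SMulCommClass S Sᵐᵒᵖ Y] [SMulCommClass Sᵐᵒᵖ S Y] [IsScalarTower k S Y] [IsScalarTower k Sᵐᵒᵖ Y] (Z : Type u) [AddCommGroup Z] [Module k Z] [Module S Z] [Module Sᵐᵒᵖ Z] [SMulCommClass S Sᵐᵒᵖ Z] [SMulCommClass Sᵐᵒᵖ S Z] [IsScalarTower k S Z] [IsScalarTower k Sᵐᵒᵖ Z]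
        (g : GObj k S M Y →+ GObj k S M Z),
      (∀ (b : Tri S M A) (p : GObj k S M Y), g (b • p) = b • g p) →
      (∀ (b : (Tri S M A)ᵐᵒᵖ) (p : GObj k S M Y), g (b • p) = b • g p) →
      ∃! f : Y →+ Z,
        (∀ (s : S) (y : Y), f (s • y) = s • f y) ∧
        (∀ (s : Sᵐᵒᵖ) (y : Y), f (s • y) = s • f y) ∧
        (∀ y : Y, g (y, 0) = (f y, 0)) ∧
        (∀ (m : M) (y : Y), g (0, NC.mk k S m y) = (0, NC.mk k S m (f y)))) ∧
    (∀ (Y : Type u) [AddCommGroup Y] [Module k Y] [Module S Y] [Module Sᵐᵒᵖ Y] [SMulCommClass S Sᵐᵒᵖ Y] [SMulCommClass Sᵐᵒᵖ S Y] [IsScalarTower k S Y] [IsScalarTower k Sᵐᵒᵖ Y],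
      @Module.Projective (S ⊗[k] Sᵐᵒᵖ) _ Y _ (envY k S Y) →
      @Module.Projective (Tri S M A ⊗[k] (Tri S M A)ᵐᵒᵖ) _ (GObj k S M Y) _
        (envGY k S A M Y)) := by
  refine ⟨⟨fun Y _ _ _ _ _ _ _ _ => sAequiv (k := k) (S := S) (A := A) (M := M) (Y := Y),
    ?_, ?_, ?_⟩, ?_, ?_⟩
  · intro Y _ _ _ _ _ _ _ _ b t
    exact sAeta_smulB (k := k) (S := S) (A := A) (M := M) (Y := Y) b t
  · intro Y _ _ _ _ _ _ _ _ b t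
    exact sAeta_smulBop (k := k) (S := S) (A := A) (M := M) (Y := Y) b t
  · intro Y _ _ _ _ _ _ _ _ Z _ _ _ _ _ _ _ _ f g hfS hfSop hgB hgBop hgy hgm u y v
    show sAeta (k := k) (S := S) (A := A) (M := M) (Y := Z)
        (NC.mk k S (NC.mk k S u (f y)) v)
      = g (sAeta (k := k) (S := S) (A := A) (M := M) (Y := Y)
        (NC.mk k S (NC.mk k S u y) v))
    rw [sAeta_mk2, sAeta_mk2]
    have hq : g (((u : Tri S M A).s • y, NC.mk k S (u : Tri S M A).m y) : GObj k S M Y)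
        = (((u : Tri S M A).s • (f y), NC.mk k S (u : Tri S M A).m (f y)) : GObj k S M Z) := by
      have h1 : (((u : Tri S M A).s • y, NC.mk k S (u : Tri S M A).m y) : GObj k S M Y)
          = ((u : Tri S M A).s • y, 0) + (0, NC.mk k S (u : Tri S M A).m y) := by
        rw [Prod.mk_add_mk, add_zero, zero_add]
      rw [h1, map_add, hgy, hgm, hfS, Prod.mk_add_mk, add_zero, zero_add]
    have hRY : ∀ p : GObj k S M Y,
        (op ((v : Tri S M A).s) : Sᵐᵒᵖ) • p
          = (op (iotaS S A M (v : Tri S M A).s) : (Tri S M A)ᵐᵒᵖ) • p := fun _ => rfl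
    have hRZ : ∀ p : GObj k S M Z,
        (op ((v : Tri S M A).s) : Sᵐᵒᵖ) • p
          = (op (iotaS S A M (v : Tri S M A).s) : (Tri S M A)ᵐᵒᵖ) • p := fun _ => rfl
    rw [hRY, hgBop, hq, hRZ]
  · -- full faithfulness
    intro Y _ _ _ _ _ _ _ _ Z _ _ _ _ _ _ _ _ g hgB hgBop
    have key1 : ∀ y : Y, g (y, 0) = ((g (y, 0)).1, 0) := by
      intro y
      have hb : ((y, 0) : GObj k S M Y) = ((1 - Tri.eps : Tri S M A)) • (y, 0) := by
        rw [gLeft_smul_def]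
        refine Prod.ext ?_ ?_
        · show y = (1 - Tri.eps : Tri S M A).s • y
          rw [show (1 - Tri.eps : Tri S M A).s = (1 : S) by simp, one_smul]
        · show (0 : NC.Tensor k S M Y) = NC.mk k S (1 - Tri.eps : Tri S M A).m y
              + (1 - Tri.eps : Tri S M A).a • (0 : NC.Tensor k S M Y)
          rw [show (1 - Tri.eps : Tri S M A).m = (0 : M) by simp, NC.mk_zero_left,
            smul_zero, add_zero]
      conv_lhs => rw [hb, hgB]
      rw [gLeft_smul_def]
      refine Prod.ext ?_ ?_
      · show (1 - Tri.eps : Tri S M A).s • _ = _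
        rw [show (1 - Tri.eps : Tri S M A).s = (1 : S) by simp, one_smul]
      · show NC.mk k S (1 - Tri.eps : Tri S M A).m _ + (1 - Tri.eps : Tri S M A).a • _ = 0
        rw [show (1 - Tri.eps : Tri S M A).m = (0 : M) by simp,
          show (1 - Tri.eps : Tri S M A).a = (0 : A) by simp, NC.mk_zero_left, zero_smul,
          add_zero]
    refine ⟨⟨⟨fun y => (g (y, 0)).1, ?_⟩, ?_⟩, ⟨?_, ?_, ?_, ?_⟩, ?_⟩
    · show (g ((0 : Y), (0 : NC.Tensor k S M Y))).1 = 0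
      rw [show (((0 : Y), (0 : NC.Tensor k S M Y)) : GObj k S M Y) = 0 from rfl, map_zero]
      rfl
    · intro y z
      show (g (y + z, (0 : NC.Tensor k S M Y))).1 = _
      rw [show ((y + z, (0 : NC.Tensor k S M Y)) : GObj k S M Y) = (y, 0) + (z, 0) by
        rw [Prod.mk_add_mk, add_zero], map_add]
      rfl
    · intro s y
      show (g (s • y, (0 : NC.Tensor k S M Y))).1 = s • (g (y, 0)).1
      have hb : ((s • y, (0 : NC.Tensor k S M Y)) : GObj k S M Y)
          = (iotaS S A M s) • ((y, 0) : GObj k S M Y) := by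
        rw [gLeft_smul_def]
        refine Prod.ext ?_ ?_
        · show s • y = (iotaS S A M s).s • y
          rw [iotaS_s]
        · show (0 : NC.Tensor k S M Y) = NC.mk k S (iotaS S A M s).m y
              + (iotaS S A M s).a • (0 : NC.Tensor k S M Y)
          rw [iotaS_m, iotaS_a, NC.mk_zero_left, zero_smul, add_zero]
      rw [hb, hgB]
      rfl
    · intro s y
      show (g (s • y, (0 : NC.Tensor k S M Y))).1 = s • (g (y, 0)).1
      have hb : ((s • y, (0 : NC.Tensor k S M Y)) : GObj k S M Y)
          = (op (iotaS S A M s.unop) : (Tri S M A)ᵐᵒᵖ) • ((y, 0) : GObj k S M Y) := by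
        refine Prod.ext ?_ ?_
        · show s • y = op ((op (iotaS S A M s.unop)).unop.s) • y
          rw [unop_op, iotaS_s, op_unop]
        · show (0 : NC.Tensor k S M Y)
              = op ((op (iotaS S A M s.unop)).unop.s) • (0 : NC.Tensor k S M Y)
          rw [smul_zero]
      rw [hb, hgBop]
      show op ((op (iotaS S A M s.unop)).unop.s) • (g (y, 0)).1 = s • (g (y, 0)).1
      rw [unop_op, iotaS_s, op_unop]
    · intro y
      exact key1 y
    · intro m y
      have hb : ((0, NC.mk k S m y) : GObj k S M Y)
          = (sAbM (S := S) (A := A) (M := M) m) • ((y, 0) : GObj k S M Y) := by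
        rw [gLeft_smul_def]
        refine Prod.ext ?_ ?_
        · show (0 : Y) = (sAbM (S := S) (A := A) (M := M) m).s • y
          rw [sAbM_s, zero_smul]
        · show NC.mk k S m y = NC.mk k S (sAbM (S := S) (A := A) (M := M) m).m y
              + (sAbM (S := S) (A := A) (M := M) m).a • (0 : NC.Tensor k S M Y)
          rw [sAbM_m, sAbM_a, zero_smul, add_zero]
      rw [hb, hgB, key1 y, gLeft_smul_def]
      refine Prod.ext ?_ ?_
      · show (sAbM (S := S) (A := A) (M := M) m).s • (g (y, 0)).1 = (0 : Z)
        rw [sAbM_s, zero_smul]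
      · show NC.mk k S (sAbM (S := S) (A := A) (M := M) m).m ((g (y, 0)).1)
            + (sAbM (S := S) (A := A) (M := M) m).a • (0 : NC.Tensor k S M Z)
          = NC.mk k S m ((g (y, 0)).1)
        rw [sAbM_m, sAbM_a, zero_smul, add_zero]
    · rintro f' ⟨h1', h2', h3', h4'⟩
      refine AddMonoidHom.ext fun y => ?_
      show f' y = (g (y, 0)).1
      exact (congrArg Prod.fst (h3' y)).symm
  · -- projectivity
    intro Y _ _ _ _ _ _ _ _ hY
    classical
    letI : Module (S ⊗[k] Sᵐᵒᵖ) Y := envY k S Y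
    letI : Module (Tri S M A ⊗[k] (Tri S M A)ᵐᵒᵖ) (GObj k S M Y) := envGY k S A M Y
    haveI hT :=
      IsScalarTower.of_algebraMap_smul (R := k) (A := S ⊗[k] Sᵐᵒᵖ) (M := Y) (fun c y => by
        show ((algebraMap k S c ⊗ₜ[k] (1 : Sᵐᵒᵖ)) : S ⊗[k] Sᵐᵒᵖ) • y = c • y
        show (algebraMap k S c) • ((1 : Sᵐᵒᵖ) • y) = c • y
        rw [one_smul, algebraMap_smul])
    obtain ⟨sY, hsY⟩ := Module.projective_def.mp hY
    let mR : (Y →₀ S ⊗[k] Sᵐᵒᵖ) →ₗ[k] (Y →₀ Tri S M A ⊗[k] (Tri S M A)ᵐᵒᵖ) :=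
      Finsupp.mapRange.linearMap (sAI (k := k) (S := S) (A := A) (M := M))
    have hmR : ∀ (F : Y →₀ S ⊗[k] Sᵐᵒᵖ) (a : Y),
        mR F a = sAI (k := k) (S := S) (A := A) (M := M) (F a) := fun F a => by
      simp [mR, Finsupp.mapRange.linearMap_apply, Finsupp.mapRange_apply]
    have hsmE : ∀ (r : S ⊗[k] Sᵐᵒᵖ) (F : Y →₀ S ⊗[k] Sᵐᵒᵖ) (a : Y), (r • F) a = r * F a :=
      fun r F a => by rw [Finsupp.smul_apply, smul_eq_mul]
    have hsmR : ∀ (r : Tri S M A ⊗[k] (Tri S M A)ᵐᵒᵖ)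
        (G : Y →₀ Tri S M A ⊗[k] (Tri S M A)ᵐᵒᵖ) (a : Y), (r • G) a = r * G a :=
      fun r G a => by rw [Finsupp.smul_apply, smul_eq_mul]
    have hkY : ∀ (c : k) (y : Y), sY (c • y) = c • sY y := fun c y => by
      rw [← algebraMap_smul (S ⊗[k] Sᵐᵒᵖ) c y, map_smul, algebraMap_smul]
    have hSY : ∀ (s : S) (y : Y),
        sY (s • y) = ((s ⊗ₜ[k] (1 : Sᵐᵒᵖ)) : S ⊗[k] Sᵐᵒᵖ) • sY y := fun s y => by
      rw [show s • y = ((s ⊗ₜ[k] (1 : Sᵐᵒᵖ)) : S ⊗[k] Sᵐᵒᵖ) • y by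
        show s • y = s • (1 : Sᵐᵒᵖ) • y; rw [one_smul], map_smul]
    have hSopY : ∀ (t : Sᵐᵒᵖ) (y : Y),
        sY (t • y) = (((1 : S) ⊗ₜ[k] t) : S ⊗[k] Sᵐᵒᵖ) • sY y := fun t y => by
      rw [show t • y = (((1 : S) ⊗ₜ[k] t) : S ⊗[k] Sᵐᵒᵖ) • y by
        show t • y = (1 : S) • t • y; rw [one_smul], map_smul]
    let taub : M →ₗ[k] Y →ₗ[k] (Y →₀ Tri S M A ⊗[k] (Tri S M A)ᵐᵒᵖ) :=
      { toFun := fun m =>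
          { toFun := fun y => ((sAbM (S := S) (A := A) (M := M) m ⊗ₜ[k]
              (1 : (Tri S M A)ᵐᵒᵖ)) : Tri S M A ⊗[k] (Tri S M A)ᵐᵒᵖ) • mR (sY y)
            map_add' := fun y z => by simp only [map_add, smul_add]
            map_smul' := fun c y => by
              simp only [RingHom.id_apply]
              rw [hkY, map_smul]
              refine Finsupp.ext fun a => ?_
              simp only [Finsupp.smul_apply, smul_eq_mul, mul_smul_comm] }
        map_add' := fun m m' => by
          refine LinearMap.ext fun y => ?_
          simp only [LinearMap.coe_mk, AddHom.coe_mk, LinearMap.add_apply]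
          rw [show sAbM (S := S) (A := A) (M := M) (m + m')
              = sAbM (S := S) (A := A) (M := M) m + sAbM (S := S) (A := A) (M := M) m' by
            ext <;> simp, TensorProduct.add_tmul, add_smul]
        map_smul' := fun c m => by
          refine LinearMap.ext fun y => ?_
          simp only [LinearMap.coe_mk, AddHom.coe_mk, RingHom.id_apply, LinearMap.smul_apply]
          rw [show sAbM (S := S) (A := A) (M := M) (c • m)
              = c • sAbM (S := S) (A := A) (M := M) m by ext <;> simp,
            ← TensorProduct.smul_tmul', smul_assoc] }
    have htaub : ∀ (s : S) (m : M) (y : Y), taub (op s • m) y = taub m (s • y) := by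
      intro s m y
      show ((sAbM (S := S) (A := A) (M := M) (op s • m) ⊗ₜ[k] (1 : (Tri S M A)ᵐᵒᵖ))
            : Tri S M A ⊗[k] (Tri S M A)ᵐᵒᵖ) • mR (sY y)
        = ((sAbM (S := S) (A := A) (M := M) m ⊗ₜ[k] (1 : (Tri S M A)ᵐᵒᵖ))
            : Tri S M A ⊗[k] (Tri S M A)ᵐᵒᵖ) • mR (sY (s • y))
      rw [hSY]
      refine Finsupp.ext fun a => ?_
      rw [hsmR, hsmR, hmR, hmR, hsmE, sAI_mulL, ← mul_assoc,
        Algebra.TensorProduct.tmul_mul_tmul, one_mul, sAbM_iotaS]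
    let tau' := NC.lift k S (P := Y →₀ Tri S M A ⊗[k] (Tri S M A)ᵐᵒᵖ) taub htaub
    have htau'_mk : ∀ (m : M) (y : Y), tau' (NC.mk k S m y)
        = ((sAbM (S := S) (A := A) (M := M) m ⊗ₜ[k] (1 : (Tri S M A)ᵐᵒᵖ))
            : Tri S M A ⊗[k] (Tri S M A)ᵐᵒᵖ) • mR (sY y) := fun m y => rfl
    have hA1 : ∀ (s : S) (F : Y →₀ S ⊗[k] Sᵐᵒᵖ),
        mR ((s ⊗ₜ[k] (1 : Sᵐᵒᵖ)) • F)
          = ((iotaS S A M s ⊗ₜ[k] (1 : (Tri S M A)ᵐᵒᵖ))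
              : Tri S M A ⊗[k] (Tri S M A)ᵐᵒᵖ) • mR F := by
      intro s F
      refine Finsupp.ext fun a => ?_
      rw [hmR, hsmE, sAI_mulL, hsmR, hmR]
    have hA2 : ∀ (b : Tri S M A) (F : Y →₀ S ⊗[k] Sᵐᵒᵖ),
        mR (((1 : S) ⊗ₜ[k] op b.s) • F)
          = (((1 : Tri S M A) ⊗ₜ[k] op b) : Tri S M A ⊗[k] (Tri S M A)ᵐᵒᵖ) • mR F := by
      intro b F
      refine Finsupp.ext fun a => ?_
      rw [hmR, hsmE, sAI_mulR, hsmR, hmR]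
    have htauA : ∀ (a : A) (t : NC.Tensor k S M Y),
        tau' (a • t) = (((Tri.iota a : Tri S M A) ⊗ₜ[k] (1 : (Tri S M A)ᵐᵒᵖ))
            : Tri S M A ⊗[k] (Tri S M A)ᵐᵒᵖ) • tau' t := by
      intro a t
      induction t using NC.induction_on with
      | zero => rw [smul_zero, map_zero, smul_zero]
      | basic m y =>
          rw [NC.smul_mk_left k S M Y A, htau'_mk, htau'_mk, ← sAiotaA_bM,
            show ((Tri.iota a * sAbM (S := S) (A := A) (M := M) m)
                  ⊗ₜ[k] (1 : (Tri S M A)ᵐᵒᵖ) : Tri S M A ⊗[k] (Tri S M A)ᵐᵒᵖ)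
              = ((Tri.iota a : Tri S M A) ⊗ₜ[k] (1 : (Tri S M A)ᵐᵒᵖ))
                  * (sAbM (S := S) (A := A) (M := M) m ⊗ₜ[k] (1 : (Tri S M A)ᵐᵒᵖ)) by
              rw [Algebra.TensorProduct.tmul_mul_tmul, one_mul]]
          exact @mul_smul (Tri S M A ⊗[k] (Tri S M A)ᵐᵒᵖ) (Y →₀ Tri S M A ⊗[k] (Tri S M A)ᵐᵒᵖ) _ _ _ _ _
      | add x y hx hy => rw [smul_add, map_add, map_add, hx, hy, smul_add]
    have htauR : ∀ (c : (Tri S M A)ᵐᵒᵖ) (t : NC.Tensor k S M Y),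
        tau' ((op c.unop.s : Sᵐᵒᵖ) • t)
          = (((1 : Tri S M A) ⊗ₜ[k] c) : Tri S M A ⊗[k] (Tri S M A)ᵐᵒᵖ) • tau' t := by
      intro c t
      induction t using NC.induction_on with
      | zero => rw [smul_zero, map_zero, smul_zero]
      | basic m y =>
          rw [NC.smul_mk_right k S M S, htau'_mk, htau'_mk, hSopY, hA2 c.unop, op_unop]
          refine Finsupp.ext fun a => ?_
          rw [hsmR, hsmR, hsmR, hsmR, ← mul_assoc, ← mul_assoc]
          simp only [Algebra.TensorProduct.tmul_mul_tmul, mul_one, one_mul]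
      | add x y hx hy => rw [smul_add, map_add, map_add, hx, hy, smul_add]
    have hadd0 : ∀ p q : GObj k S M Y, mR (sY (p + q).1) + tau' (p + q).2
        = (mR (sY p.1) + tau' p.2) + (mR (sY q.1) + tau' q.2) := fun p q => by
      rw [show (p + q).1 = p.1 + q.1 from rfl, show (p + q).2 = p.2 + q.2 from rfl,
        map_add, map_add, map_add]
      abel
    have hzA : ∀ (a : A) (F : Y →₀ S ⊗[k] Sᵐᵒᵖ),
        (((Tri.iota a : Tri S M A) ⊗ₜ[k] (1 : (Tri S M A)ᵐᵒᵖ))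
            : Tri S M A ⊗[k] (Tri S M A)ᵐᵒᵖ) • mR F = 0 := by
      intro a F
      refine Finsupp.ext fun x => ?_
      rw [hsmR, hmR, sAI_zeroA, Finsupp.coe_zero, Pi.zero_apply]
    have hzS : ∀ (s : S) (t : NC.Tensor k S M Y),
        ((iotaS S A M s ⊗ₜ[k] (1 : (Tri S M A)ᵐᵒᵖ))
            : Tri S M A ⊗[k] (Tri S M A)ᵐᵒᵖ) • tau' t = 0 := by
      intro s t
      induction t using NC.induction_on with
      | zero => rw [map_zero, smul_zero]
      | basic m y =>
          rw [htau'_mk]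
          refine Finsupp.ext fun a => ?_
          rw [hsmR, hsmR, ← mul_assoc, Algebra.TensorProduct.tmul_mul_tmul, one_mul,
            sAiotaS_bM, TensorProduct.zero_tmul, zero_mul, Finsupp.coe_zero, Pi.zero_apply]
      | add x y hx hy => rw [map_add, smul_add, hx, hy, add_zero]
    have hzM : ∀ (m' : M) (t : NC.Tensor k S M Y),
        ((sAbM (S := S) (A := A) (M := M) m' ⊗ₜ[k] (1 : (Tri S M A)ᵐᵒᵖ))
            : Tri S M A ⊗[k] (Tri S M A)ᵐᵒᵖ) • tau' t = 0 := by
      intro m' t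
      induction t using NC.induction_on with
      | zero => rw [map_zero, smul_zero]
      | basic m y =>
          rw [htau'_mk]
          refine Finsupp.ext fun a => ?_
          rw [hsmR, hsmR, ← mul_assoc, Algebra.TensorProduct.tmul_mul_tmul, one_mul,
            sAbM_bM, TensorProduct.zero_tmul, zero_mul, Finsupp.coe_zero, Pi.zero_apply]
      | add x y hx hy => rw [map_add, smul_add, hx, hy, add_zero]
    have hKL : ∀ (b : Tri S M A) (p : GObj k S M Y),
        mR (sY (b • p).1) + tau' (b • p).2
          = ((b ⊗ₜ[k] (1 : (Tri S M A)ᵐᵒᵖ)) : Tri S M A ⊗[k] (Tri S M A)ᵐᵒᵖ)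
              • (mR (sY p.1) + tau' p.2) := by
      intro b p
      rw [show (b • p).1 = b.s • p.1 from rfl,
        show (b • p).2 = NC.mk k S b.m p.1 + b.a • p.2 from rfl]
      rw [hSY, hA1, map_add, htau'_mk, htauA]
      conv_rhs => rw [sAdecompB (S := S) (A := A) (M := M) b]
      rw [TensorProduct.add_tmul, TensorProduct.add_tmul, add_smul, add_smul, smul_add,
        smul_add, smul_add, hzA, hzS, hzM]
      abel
    have hKR : ∀ (c : (Tri S M A)ᵐᵒᵖ) (p : GObj k S M Y),
        mR (sY (c • p).1) + tau' (c • p).2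
          = (((1 : Tri S M A) ⊗ₜ[k] c) : Tri S M A ⊗[k] (Tri S M A)ᵐᵒᵖ)
              • (mR (sY p.1) + tau' p.2) := by
      intro c p
      rw [show (c • p).1 = (op c.unop.s : Sᵐᵒᵖ) • p.1 from rfl,
        show (c • p).2 = (op c.unop.s : Sᵐᵒᵖ) • p.2 from rfl,
        hSopY, hA2 c.unop, op_unop, htauR, smul_add]
    let alpha : GObj k S M Y →ₗ[Tri S M A ⊗[k] (Tri S M A)ᵐᵒᵖ]
        (Y →₀ Tri S M A ⊗[k] (Tri S M A)ᵐᵒᵖ) :=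
      { toFun := fun p => mR (sY p.1) + tau' p.2
        map_add' := hadd0
        map_smul' := fun r p => by
          simp only [RingHom.id_apply]
          induction r using TensorProduct.induction_on with
          | zero =>
              rw [zero_smul (Tri S M A ⊗[k] (Tri S M A)ᵐᵒᵖ) p,
                zero_smul (Tri S M A ⊗[k] (Tri S M A)ᵐᵒᵖ) (mR (sY p.1) + tau' p.2)]
              show mR (sY (0 : GObj k S M Y).1) + tau' (0 : GObj k S M Y).2 = 0
              rw [show ((0 : GObj k S M Y)).1 = 0 from rfl,
                show ((0 : GObj k S M Y)).2 = 0 from rfl, map_zero, map_zero, map_zero,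
                add_zero]
          | tmul b c =>
              rw [show (b ⊗ₜ[k] c) • p = b • (c • p) from rfl, hKL, hKR]
              refine Finsupp.ext fun a => ?_
              rw [hsmR, hsmR, hsmR, ← mul_assoc]
              simp only [Algebra.TensorProduct.tmul_mul_tmul, mul_one, one_mul]
          | add r1 r2 h1 h2 => rw [add_smul, hadd0, h1, h2, ← add_smul] }
    let beta : (Y →₀ Tri S M A ⊗[k] (Tri S M A)ᵐᵒᵖ) →ₗ[Tri S M A ⊗[k] (Tri S M A)ᵐᵒᵖ]
        GObj k S M Y :=
      Finsupp.linearCombination (Tri S M A ⊗[k] (Tri S M A)ᵐᵒᵖ)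
        (fun y => ((y, 0) : GObj k S M Y))
    have hLact : ∀ (e : S ⊗[k] Sᵐᵒᵖ) (y : Y),
        (sAI (k := k) (S := S) (A := A) (M := M) e) • ((y, 0) : GObj k S M Y)
          = ((e • y : Y), 0) := by
      intro e y
      induction e using TensorProduct.induction_on with
      | zero =>
          rw [map_zero, zero_smul (Tri S M A ⊗[k] (Tri S M A)ᵐᵒᵖ) ((y, 0) : GObj k S M Y),
            zero_smul (S ⊗[k] Sᵐᵒᵖ) y]; rfl
      | tmul s t =>
          rw [sAI_tmul]
          have h1 : (op (iotaS S A M t.unop) : (Tri S M A)ᵐᵒᵖ) • ((y, 0) : GObj k S M Y)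
              = ((t • y : Y), 0) := by
            refine Prod.ext ?_ ?_
            · show op ((op (iotaS S A M t.unop)).unop.s) • y = t • y
              rw [unop_op, iotaS_s, op_unop]
            · show op ((op (iotaS S A M t.unop)).unop.s) • (0 : NC.Tensor k S M Y) = 0
              rw [smul_zero]
          have h2 : iotaS S A M s • (((t • y : Y), 0) : GObj k S M Y)
              = ((s • t • y : Y), 0) := by
            rw [gLeft_smul_def]
            refine Prod.ext ?_ ?_
            · show (iotaS S A M s).s • (t • y) = s • t • y
              rw [iotaS_s]
            · show NC.mk k S (iotaS S A M s).m (t • y)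
                  + (iotaS S A M s).a • (0 : NC.Tensor k S M Y) = 0
              rw [iotaS_m, iotaS_a, NC.mk_zero_left, zero_smul, add_zero]
          show iotaS S A M s •
              ((op (iotaS S A M t.unop) : (Tri S M A)ᵐᵒᵖ) • ((y, 0) : GObj k S M Y))
            = (((s ⊗ₜ[k] t : S ⊗[k] Sᵐᵒᵖ)) • y, 0)
          rw [h1, h2]
          rfl
      | add e1 e2 h1 h2 =>
          rw [map_add, add_smul, h1, h2, Prod.mk_add_mk, add_zero, ← add_smul]
    have hbF : ∀ F : Y →₀ S ⊗[k] Sᵐᵒᵖ,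
        beta (mR F)
          = (((Finsupp.linearCombination (S ⊗[k] Sᵐᵒᵖ) (id : Y → Y)) F : Y), 0) := by
      intro F
      induction F using Finsupp.induction_linear with
      | zero => rw [map_zero, map_zero, map_zero]; rfl
      | add F1 F2 h1 h2 => rw [map_add, map_add, h1, h2, map_add, Prod.mk_add_mk, add_zero]
      | single a e =>
          have h1 : mR (Finsupp.single a e)
              = Finsupp.single a (sAI (k := k) (S := S) (A := A) (M := M) e) := by
            refine Finsupp.ext fun b => ?_
            rw [hmR, Finsupp.single_apply, Finsupp.single_apply]
            split
            · rfl
            · rw [map_zero]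
          rw [h1, Finsupp.linearCombination_single, Finsupp.linearCombination_single, hLact]
          rfl
    have hbT : ∀ t : NC.Tensor k S M Y, beta (tau' t) = ((0 : Y), t) := by
      intro t
      induction t using NC.induction_on with
      | zero => rw [map_zero, map_zero]; rfl
      | basic m y =>
          rw [htau'_mk, map_smul, hbF,
            show (Finsupp.linearCombination (S ⊗[k] Sᵐᵒᵖ) (id : Y → Y)) (sY y) = y
              from hsY y]
          show sAbM (S := S) (A := A) (M := M) m •
              ((1 : (Tri S M A)ᵐᵒᵖ) • ((y, 0) : GObj k S M Y)) = _
          rw [one_smul, gLeft_smul_def]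
          refine Prod.ext ?_ ?_
          · show (sAbM (S := S) (A := A) (M := M) m).s • y = (0 : Y)
            rw [sAbM_s, zero_smul]
          · show NC.mk k S (sAbM (S := S) (A := A) (M := M) m).m y
                + (sAbM (S := S) (A := A) (M := M) m).a • (0 : NC.Tensor k S M Y)
              = NC.mk k S m y
            rw [sAbM_m, sAbM_a, zero_smul, add_zero]
      | add x y hx hy => rw [map_add, map_add, hx, hy, Prod.mk_add_mk, zero_add]
    refine Module.Projective.of_split alpha beta (LinearMap.ext fun p => ?_)
    show beta (mR (sY p.1) + tau' p.2) = p
    rw [map_add, hbF, hbT,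
      show (Finsupp.linearCombination (S ⊗[k] Sᵐᵒᵖ) (id : Y → Y)) (sY p.1) = p.1
        from hsY p.1, Prod.mk_add_mk, add_zero, zero_add]


end
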